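/- Let 𝒜 and 𝓑 be reduced inverse automata over Ã such that 𝒜 →e^{w} 𝓑 for some nonempty reduced word w. Then either 𝒜 →i 𝓑 (an i-step), or 𝒜 →re^{(p,u,q)} 𝓑 for some states p, q of 𝒜 and some reduced word u with |u| ≤ |w|. -/

import Mathlib

open Function

/-- A letter of the symmetrized alphabet Ã: `(a, true)` stands for `a ∈ A` and
`(a, false)` for `a⁻¹ ∈ A⁻¹`. -/
abbrev Ltr (A : Type) := A × Bool

/-- Inversion of letters of Ã. -/
def Ltr.inv {A : Type} (x : Ltr A) : Ltr A := (x.1, !x.2)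

/-- The inverse `u⁻¹` of a word `u` over Ã. -/
def wordInv {A : Type} (w : List (Ltr A)) : List (Ltr A) := (w.map Ltr.inv).reverse

/-- A word over Ã is reduced iff it has no factor of the form `a a⁻¹` or `a⁻¹ a`. -/
def IsReducedWord {A : Type} (w : List (Ltr A)) : Prop :=
  ∀ (u v : List (Ltr A)) (a : A) (b : Bool), w ≠ u ++ (a, b) :: (a, !b) :: v

/-- An automaton over the symmetrized alphabet Ã, with a bundled state type `Q`,
an initial state `q0` and a set `E` of transitions. -/
structure Autom (A : Type) : Type 1 where
  Q : Type
  q0 : Q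
  E : Set (Q × Ltr A × Q)

namespace Autom

variable {A : Type}

/-- Paths using only transitions in the set `T`. -/
inductive PathOn (M : Autom A) (T : Set (M.Q × Ltr A × M.Q)) :
    M.Q → List (Ltr A) → M.Q → Prop
  | nil (q : M.Q) : PathOn M T q [] q
  | cons {p q r : M.Q} {a : Ltr A} {w : List (Ltr A)} :
      (p, a, q) ∈ T → PathOn M T q w r → PathOn M T p (a :: w) r

/-- `M.Path p u q` : the word `u` labels a path from state `p` to state `q` in `M`. -/
def Path (M : Autom A) : M.Q → List (Ltr A) → M.Q → Prop := M.PathOn M.E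

/-- The language L(𝒜) of words labeling a path from `q0` to `q0`. -/
def lang (M : Autom A) : Set (List (Ltr A)) := {w | M.Path M.q0 w M.q0}

/-- The set L(𝒜)ρ of reductions (in the free group `F(A)`) of words of L(𝒜). -/
def langRho (M : Autom A) : Set (FreeGroup A) := FreeGroup.mk '' M.lang

/-- Dual automaton: `(p,a,q)` is an edge iff `(q,a⁻¹,p)` is one. -/
def Dual (M : Autom A) : Prop := ∀ p a q, (p, a, q) ∈ M.E ↔ (q, Ltr.inv a, p) ∈ M.E

/-- Deterministic automaton. -/
def Deterministic (M : Autom A) : Prop :=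
  ∀ p a q q', (p, a, q) ∈ M.E → (p, a, q') ∈ M.E → q = q'

/-- Trim automaton: every state lies on a path from `q0` to `q0`. -/
def Trim (M : Autom A) : Prop := ∀ q, ∃ u v, M.Path M.q0 u q ∧ M.Path q v M.q0

/-- Inverse automaton: deterministic, trim and dual. -/
def IsInv (M : Autom A) : Prop := M.Deterministic ∧ M.Trim ∧ M.Dual

/-- Reduced automaton: every state lies on a path from `q0` to `q0` labeled by
a reduced word. -/
def IsRed (M : Autom A) : Prop :=
  ∀ q, ∃ u v, IsReducedWord (u ++ v) ∧ M.Path M.q0 u q ∧ M.Path q v M.q0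

/-- Homomorphisms of automata. -/
def IsHom (M N : Autom A) (φ : M.Q → N.Q) : Prop :=
  φ M.q0 = N.q0 ∧ ∀ p a q, (p, a, q) ∈ M.E → (φ p, a, φ q) ∈ N.E

/-- Isomorphism of automata. -/
def Isomorphic (M N : Autom A) : Prop :=
  ∃ φ : M.Q ≃ N.Q, M.IsHom N φ ∧ N.IsHom M φ.symm

/-- `N` is (isomorphic to) the automaton obtained from `M` by identifying the two
states `p` and `q`. -/
def IsIdentification (M : Autom A) (p q : M.Q) (N : Autom A) : Prop :=
  ∃ φ : M.Q → N.Q,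
    Surjective φ ∧ φ M.q0 = N.q0 ∧
    (∀ x y, φ x = φ y ↔ x = y ∨ (x = p ∧ y = q) ∨ (x = q ∧ y = p)) ∧
    (∀ e : N.Q × Ltr A × N.Q, e ∈ N.E ↔ ∃ e' ∈ M.E, e = (φ e'.1, e'.2.1, φ e'.2.2))

/-- `N` is (isomorphic to) the automaton obtained from `M` by deleting the state `q`
and all transitions involving it. -/
def IsDeletion (M : Autom A) (q : M.Q) (N : Autom A) : Prop :=
  ∃ φ : N.Q → M.Q,
    Injective φ ∧ Set.range φ = {x | x ≠ q} ∧ φ N.q0 = M.q0 ∧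
    (∀ e : N.Q × Ltr A × N.Q, e ∈ N.E ↔ (φ e.1, e.2.1, φ e.2.2) ∈ M.E)

/-- Elementary reduction of type 1. -/
def Red1 (M N : Autom A) : Prop :=
  ∃ p q r a, p ≠ q ∧ (r, a, p) ∈ M.E ∧ (r, a, q) ∈ M.E ∧ M.IsIdentification p q N

/-- Elementary reduction of type 2. -/
def Red2 (M N : Autom A) : Prop :=
  ∃ (p q : M.Q) (a : Ltr A), q ≠ M.q0 ∧ (p, a, q) ∈ M.E ∧ (q, Ltr.inv a, p) ∈ M.E ∧
    (∀ e ∈ M.E, e.1 = q ∨ e.2.2 = q → e = (p, a, q) ∨ e = (q, Ltr.inv a, p)) ∧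
    M.IsDeletion q N

/-- `N` is (isomorphic to) the reduction `Mρ` of `M`: perform elementary reductions
of type 1 until the automaton is deterministic, then elementary reductions of type 2
until none is possible. -/
def ReductionOf (M N : Autom A) : Prop :=
  ∃ M₁, Relation.ReflTransGen Red1 M M₁ ∧ M₁.Deterministic ∧
    Relation.ReflTransGen Red2 M₁ N ∧ ∀ N', ¬ Red2 N N'

/-- `N` is (isomorphic to) the expansion of `M` by `(p, w, q)`: a new path labeled `w`
from `p` to `q` (together with its inverse path) whose intermediate states are new. -/
def IsExpansion (M : Autom A) (p : M.Q) (w : List (Ltr A)) (q : M.Q) (N : Autom A) : Prop :=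
  w ≠ [] ∧
  ∃ (φ : M.Q → N.Q) (c : Fin (w.length + 1) → N.Q),
    Injective φ ∧ φ M.q0 = N.q0 ∧ c 0 = φ p ∧ c (Fin.last w.length) = φ q ∧
    (∀ i : Fin (w.length + 1), 0 < (i : ℕ) → (i : ℕ) < w.length → c i ∉ Set.range φ) ∧
    (∀ i j : Fin (w.length + 1), 0 < (i : ℕ) → (i : ℕ) < w.length → c i = c j → i = j) ∧
    (∀ x : N.Q, (∃ y, φ y = x) ∨ ∃ i, c i = x) ∧
    (∀ e : N.Q × Ltr A × N.Q, e ∈ N.E ↔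
      ((∃ e' ∈ M.E, e = (φ e'.1, e'.2.1, φ e'.2.2)) ∨
        ∃ i : Fin w.length,
          e = (c i.castSucc, w.get i, c i.succ) ∨
          e = (c i.succ, Ltr.inv (w.get i), c i.castSucc)))

/-- `M →exp^{(p,w,q)} N` : `N` is (isomorphic to) the reduction of the expansion
of `M` by `(p,w,q)`. -/
def ExpStep (M : Autom A) (p : M.Q) (w : List (Ltr A)) (q : M.Q) (N : Autom A) : Prop :=
  ∃ N' N'', M.IsExpansion p w q N' ∧ ReductionOf N' N'' ∧ Isomorphic N'' N

/-- `M →re^{(p,w,q)} N` : a reduced expansion, i.e. an expansion-then-reduction in which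
`M` embeds in `N`. -/
def REStep (M : Autom A) (p : M.Q) (w : List (Ltr A)) (q : M.Q) (N : Autom A) : Prop :=
  M.ExpStep p w q N ∧ ∃ ψ : M.Q → N.Q, Injective ψ ∧ M.IsHom N ψ

/-- `M →e^{w} N` : an e-step, i.e. `M →exp^{(q0,w,q0)} N`. -/
def EStep (M : Autom A) (w : List (Ltr A)) (N : Autom A) : Prop :=
  M.ExpStep M.q0 w M.q0 N

/-- `M →i^{p=q} N` : an i-step; `N` is (isomorphic to) the reduction of the automaton
obtained from `M` by identifying the distinct states `p` and `q`. -/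
def IStep (M : Autom A) (p q : M.Q) (N : Autom A) : Prop :=
  p ≠ q ∧ ∃ N' N'', M.IsIdentification p q N' ∧ ReductionOf N' N'' ∧ Isomorphic N'' N

/-- i-step, allowing `p = q` (in which case nothing happens). -/
def IStep' (M : Autom A) (p q : M.Q) (N : Autom A) : Prop :=
  (p = q ∧ M.Isomorphic N) ∨ M.IStep p q N

/-- `M →i N` : some i-step applies. -/
def IStepAny (M N : Autom A) : Prop := ∃ p q, M.IStep p q N

/-- Some reduced expansion (by a nonempty reduced word) applies. -/
def REStepAny (M N : Autom A) : Prop :=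
  ∃ p w q, IsReducedWord w ∧ M.REStep p w q N

/-- `M` is (isomorphic to) `Γ_A(H)` : a reduced inverse automaton with `L(M)ρ = H`. -/
def Represents (M : Autom A) (H : Subgroup (FreeGroup A)) : Prop :=
  M.IsInv ∧ M.IsRed ∧ M.langRho = ↑H

/-- The `q0`-diameter of an automaton: the maximum over all states `q` of the minimal
length of a reduced word labeling a path from `q0` to `q`. -/
noncomputable def diam (M : Autom A) : ℕ :=
  ⨆ q : M.Q, sInf {n | ∃ u, IsReducedWord u ∧ u.length = n ∧ M.Path M.q0 u q}

end Autom

/-- `S` is a basis of the subgroup `H`: `S` generates `H` and freely so. -/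
def IsFreeBasis {G : Type} [Group G] (S : Set G) (H : Subgroup G) : Prop :=
  Subgroup.closure S = H ∧
    Injective (FreeGroup.lift (Subtype.val : S → G) : FreeGroup S →* G)

/-- `H ≤ff K` : `H` is a free factor of `K`. -/
def FreeFactor {G : Type} [Group G] (H K : Subgroup G) : Prop :=
  ∃ B C : Set G, IsFreeBasis B H ∧ IsFreeBasis C K ∧ B ⊆ C

/-- The rank of a subgroup: the cardinality of a basis (the common value of
the cardinalities of all bases, when `H` is a finite-rank free group). -/
noncomputable def rk {G : Type} [Group G] (H : Subgroup G) : ℕ :=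
  sInf {n | ∃ S : Set G, IsFreeBasis S H ∧ S.ncard = n}

/-- `L` is a graphical free factor of `K` with respect to `A`: `Γ_A(L)` embeds
in `Γ_A(K)`. -/
def GraphicalFF {A : Type} (L K : Subgroup (FreeGroup A)) : Prop :=
  L ≤ K ∧ ∃ ML MK : Autom A, ML.Represents L ∧ MK.Represents K ∧
    ∃ ψ : ML.Q → MK.Q, Injective ψ ∧ ML.IsHom MK ψ

/-- A step (i-step or reduced expansion) from `M` to `N` of cost `c`. -/
def StepCost {A : Type} (M N : Autom A) (c : ℕ) : Prop :=
  (c = 0 ∧ Autom.IStepAny M N) ∨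
  (∃ p w q, IsReducedWord w ∧ w.length = c ∧ M.REStep p w q N)

/-- The well-order `≺` on cost sequences. -/
def costLT (k l : List ℕ) : Prop :=
  k.length < l.length ∨
  (k.length = l.length ∧ k.sum < l.sum) ∨
  (k.length = l.length ∧ k.sum = l.sum ∧ List.Lex (· < ·) k l)

/- ===================== Auxiliary development for Proposition 2.3 ===================== -/

namespace Prop23

open Autom

variable {A : Type}

/-! ### Letters and reduced words -/

@[simp] lemma Ltr.inv_inv (x : Ltr A) : x.inv.inv = x := by
  cases x with
  | mk a b => simp [Ltr.inv]

lemma Ltr.inv_ne (x : Ltr A) : x.inv ≠ x := by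
  cases x with
  | mk a b => simp [Ltr.inv]

lemma Ltr.inv_injective {A : Type} : Function.Injective (Ltr.inv (A := A)) := by
  intro x y h
  rw [← Ltr.inv_inv x, h, Ltr.inv_inv]

lemma Ltr.ne_inv_symm {x y : Ltr A} (h : x ≠ Ltr.inv y) : y ≠ Ltr.inv x := by
  intro he; apply h; rw [he, Ltr.inv_inv]

lemma reduced_no_cancel {w : List (Ltr A)} (hw : IsReducedWord w) {i : ℕ}
    (h : i + 1 < w.length) (h' : i < w.length) :
    w.get ⟨i+1, h⟩ ≠ Ltr.inv (w.get ⟨i, h'⟩) := by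
  intro he
  apply hw (w.take i) (w.drop (i+2)) (w.get ⟨i, h'⟩).1 (w.get ⟨i, h'⟩).2
  conv_lhs => rw [← List.take_append_drop i w]
  congr 1
  rw [List.drop_eq_getElem_cons h', List.drop_eq_getElem_cons h]
  have : w[i+1] = Ltr.inv (w.get ⟨i, h'⟩) := he
  rw [this]
  simp [Ltr.inv]

/-! ### Path lemmas -/

lemma path_append {M : Autom A} {p q r : M.Q} {u v : List (Ltr A)}
    (h1 : M.Path p u q) (h2 : M.Path q v r) : M.Path p (u ++ v) r := by
  induction h1 with
  | nil => exact h2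
  | cons e _ ih => exact Autom.PathOn.cons e (ih h2)

lemma path_split {M : Autom A} {p r : M.Q} {u v : List (Ltr A)}
    (h : M.Path p (u ++ v) r) : ∃ q, M.Path p u q ∧ M.Path q v r := by
  induction u generalizing p with
  | nil => exact ⟨p, Autom.PathOn.nil p, h⟩
  | cons a t ih =>
    cases h with
    | cons e h' =>
      obtain ⟨q, h1, h2⟩ := ih h'
      exact ⟨q, Autom.PathOn.cons e h1, h2⟩

lemma path_nil_iff {M : Autom A} {p q : M.Q} (h : M.Path p [] q) : p = q := by
  cases h; rfl

lemma path_single {M : Autom A} {p q : M.Q} {a : Ltr A} (h : M.Path p [a] q) :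
    (p, a, q) ∈ M.E := by
  cases h with
  | cons e h' => cases h'; exact e

lemma path_cons_iff {M : Autom A} {p r : M.Q} {a : Ltr A} {u : List (Ltr A)}
    (h : M.Path p (a :: u) r) : ∃ q, (p, a, q) ∈ M.E ∧ M.Path q u r := by
  cases h with
  | cons e h' => exact ⟨_, e, h'⟩

lemma path_det {M : Autom A} (hdet : M.Deterministic) {p : M.Q} {u : List (Ltr A)}
    {q q' : M.Q} (h1 : M.Path p u q) (h2 : M.Path p u q') : q = q' := by
  induction u generalizing p with
  | nil => rw [← path_nil_iff h1, ← path_nil_iff h2]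
  | cons a t ih =>
    obtain ⟨x, e1, h1'⟩ := path_cons_iff h1
    obtain ⟨y, e2, h2'⟩ := path_cons_iff h2
    cases hdet _ _ _ _ e1 e2
    exact ih h1' h2'

lemma edge_codet {M : Autom A} (hdet : M.Deterministic) (hdual : M.Dual)
    {x y z : M.Q} {a : Ltr A} (h1 : (x, a, z) ∈ M.E) (h2 : (y, a, z) ∈ M.E) : x = y := by
  have h1' := (hdual _ _ _).1 h1
  have h2' := (hdual _ _ _).1 h2
  exact hdet _ _ _ _ h1' h2'

lemma path_codet {M : Autom A} (hdet : M.Deterministic) (hdual : M.Dual)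
    {u : List (Ltr A)} {x y z : M.Q} (h1 : M.Path x u z) (h2 : M.Path y u z) : x = y := by
  induction u generalizing x y with
  | nil => rw [path_nil_iff h1, path_nil_iff h2]
  | cons a t ih =>
    obtain ⟨x', e1, h1'⟩ := path_cons_iff h1
    obtain ⟨y', e2, h2'⟩ := path_cons_iff h2
    cases ih h1' h2'
    exact edge_codet hdet hdual e1 e2

lemma hom_path {M N : Autom A} {φ : M.Q → N.Q} (hφ : M.IsHom N φ)
    {p q : M.Q} {u : List (Ltr A)} (h : M.Path p u q) : N.Path (φ p) u (φ q) := by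
  induction h with
  | nil => exact Autom.PathOn.nil _
  | cons e _ ih => exact Autom.PathOn.cons (hφ.2 _ _ _ e) ih

lemma path_entry {M : Autom A} {s t : M.Q} {u : List (Ltr A)} (h : M.Path s u t)
    (hst : s ≠ t) : ∃ y b, y ≠ t ∧ (y, b, t) ∈ M.E := by
  induction h with
  | nil => exact absurd rfl hst
  | @cons p q r a w e _ ih =>
    by_cases hq : q = r
    · subst hq; exact ⟨p, a, hst, e⟩
    · exact ih hq

/-! ### The fold relation -/

inductive Fold (G : Autom A) : G.Q → G.Q → Prop
  | refl (x : G.Q) : Fold G x x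
  | symm : ∀ {x y : G.Q}, Fold G x y → Fold G y x
  | trans : ∀ {x y z : G.Q}, Fold G x y → Fold G y z → Fold G x z
  | move : ∀ {r r' x y : G.Q} {a : Ltr A}, Fold G r r' →
      (r, a, x) ∈ G.E → (r', a, y) ∈ G.E → Fold G x y

lemma Fold.map {G H : Autom A} {φ : G.Q → H.Q} (hφ : G.IsHom H φ) {x y : G.Q}
    (h : Fold G x y) : Fold H (φ x) (φ y) := by
  induction h with
  | refl => exact Fold.refl _
  | symm _ ih => exact ih.symm
  | trans _ _ ih1 ih2 => exact ih1.trans ih2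
  | move _ e1 e2 ih => exact Fold.move ih (hφ.2 _ _ _ e1) (hφ.2 _ _ _ e2)

/-- A "partial deterministic labeling" collapses the fold relation. -/
lemma Fold.collapse {G : Autom A} {Z : Type} (ξ : G.Q → Z) (δ : Z → Ltr A → Option Z)
    (hδ : ∀ e ∈ G.E, δ (ξ e.1) e.2.1 = some (ξ e.2.2)) {x y : G.Q}
    (h : Fold G x y) : ξ x = ξ y := by
  induction h with
  | refl => rfl
  | symm _ ih => exact ih.symm
  | trans _ _ ih1 ih2 => exact ih1.trans ih2
  | move _ e1 e2 ih =>
    have h1 := hδ _ e1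
    have h2 := hδ _ e2
    simp only at h1 h2
    rw [ih] at h1
    rw [h1] at h2
    exact Option.some_injective _ h2

lemma Fold.collapse_det {G N : Autom A} {σ : G.Q → N.Q} (hσ : G.IsHom N σ)
    (hdet : N.Deterministic) {x y : G.Q} (h : Fold G x y) : σ x = σ y := by
  induction h with
  | refl => rfl
  | symm _ ih => exact ih.symm
  | trans _ _ ih1 ih2 => exact ih1.trans ih2
  | move _ e1 e2 ih =>
    have h1 := hσ.2 _ _ _ e1
    have h2 := hσ.2 _ _ _ e2
    rw [ih] at h1
    exact hdet _ _ _ _ h1 h2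

lemma fold_pair {G : Autom A} {x y : G.Q} (hf : Fold G x y) (hne : x ≠ y) :
    ∃ p q r a, p ≠ q ∧ (r, a, p) ∈ G.E ∧ (r, a, q) ∈ G.E := by
  induction hf with
  | refl => exact absurd rfl hne
  | symm _ ih => exact ih (Ne.symm hne)
  | @trans x y z h1 h2 ih1 ih2 =>
    by_cases hxy : x = y
    · subst hxy; exact ih2 hne
    · exact ih1 hxy
  | @move r r' x y a h e1 e2 ih =>
    by_cases hr : r = r'
    · subst hr; exact ⟨x, y, r, a, hne, e1, e2⟩
    · exact ih hr
/-! ### Identification quotient -/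

open Classical in
noncomputable def collapseMap {Q : Type} (p : Q) {q : Q} (hne : p ≠ q) (z : Q) : {z : Q // z ≠ q} :=
  if h : z = q then ⟨p, hne⟩ else ⟨z, h⟩

lemma collapseMap_val {Q : Type} (p : Q) {q : Q} (hne : p ≠ q) (z : {z : Q // z ≠ q}) :
    collapseMap p hne z.val = z := by
  simp [collapseMap, z.prop]

lemma collapseMap_surj {Q : Type} (p : Q) {q : Q} (hne : p ≠ q) :
    Surjective (collapseMap p hne) := fun z => ⟨z.val, collapseMap_val p hne z⟩

lemma collapseMap_eq_iff {Q : Type} (p : Q) {q : Q} (hne : p ≠ q) (x y : Q) :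
    collapseMap p hne x = collapseMap p hne y ↔
      x = y ∨ (x = p ∧ y = q) ∨ (x = q ∧ y = p) := by
  constructor
  · intro h
    by_cases hx : x = q <;> by_cases hy : y = q
    · left; rw [hx, hy]
    · unfold collapseMap at h
      rw [dif_pos hx, dif_neg hy, Subtype.mk.injEq] at h
      right; right; exact ⟨hx, h.symm⟩
    · unfold collapseMap at h
      rw [dif_neg hx, dif_pos hy, Subtype.mk.injEq] at h
      right; left; exact ⟨h, hy⟩
    · unfold collapseMap at h
      rw [dif_neg hx, dif_neg hy, Subtype.mk.injEq] at h
      left; exact h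
  · rintro (h | ⟨h1, h2⟩ | ⟨h1, h2⟩)
    · rw [h]
    · subst h1; subst h2
      unfold collapseMap
      rw [dif_pos rfl, dif_neg hne]
    · subst h1; subst h2
      unfold collapseMap
      rw [dif_pos rfl, dif_neg hne]

noncomputable def identAut (G : Autom A) {p q : G.Q} (hne : p ≠ q) : Autom A where
  Q := {z : G.Q // z ≠ q}
  q0 := collapseMap p hne G.q0
  E := {e | ∃ e' ∈ G.E, e = (collapseMap p hne e'.1, e'.2.1, collapseMap p hne e'.2.2)}

lemma ident_spec (G : Autom A) {p q : G.Q} (hne : p ≠ q) :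
    G.IsIdentification p q (identAut G hne) :=
  ⟨collapseMap p hne, collapseMap_surj p hne, rfl, collapseMap_eq_iff p hne,
    fun _ => Iff.rfl⟩

lemma ident_hom (G : Autom A) {p q : G.Q} (hne : p ≠ q) :
    G.IsHom (identAut G hne) (collapseMap p hne) :=
  ⟨rfl, fun p' a' q' he => ⟨(p', a', q'), he, rfl⟩⟩

/-! ### Fold reflection along an identification -/

lemma fold_of_ident_eq {G : Autom A} {G₁Q : Type} {p q : G.Q} {φ : G.Q → G₁Q}
    (hfib : ∀ x y, φ x = φ y ↔ x = y ∨ (x = p ∧ y = q) ∨ (x = q ∧ y = p))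
    (hpq : Fold G p q) {x y : G.Q} (hxy : φ x = φ y) : Fold G x y := by
  rcases (hfib x y).1 hxy with h | ⟨h1, h2⟩ | ⟨h1, h2⟩
  · subst h; exact Fold.refl x
  · subst h1; subst h2; exact hpq
  · subst h1; subst h2; exact hpq.symm

lemma fold_reflect_ident {G G₁ : Autom A} {p q : G.Q} {φ : G.Q → G₁.Q}
    (hsurj : Surjective φ)
    (hfib : ∀ x y, φ x = φ y ↔ x = y ∨ (x = p ∧ y = q) ∨ (x = q ∧ y = p))
    (hE : ∀ e : G₁.Q × Ltr A × G₁.Q, e ∈ G₁.E ↔ ∃ e' ∈ G.E, e = (φ e'.1, e'.2.1, φ e'.2.2))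
    (hpq : Fold G p q) {x₁ y₁ : G₁.Q} (h : Fold G₁ x₁ y₁) :
    ∀ x y, φ x = x₁ → φ y = y₁ → Fold G x y := by
  induction h with
  | refl z => exact fun x y hx hy => fold_of_ident_eq hfib hpq (hx.trans hy.symm)
  | symm _ ih => exact fun x y hx hy => (ih y x hy hx).symm
  | @trans a b c _ _ ih1 ih2 =>
    intro x y hx hy
    obtain ⟨z, hz⟩ := hsurj b
    exact (ih1 x z hx hz).trans (ih2 z y hz hy)
  | @move r₁ r₁' x₁' y₁' a _ e1 e2 ih =>
    intro x y hx hy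
    obtain ⟨e1', he1', heq1⟩ := (hE _).1 e1
    obtain ⟨e2', he2', heq2⟩ := (hE _).1 e2
    obtain ⟨hr1, ha1, hx1⟩ : r₁ = φ e1'.1 ∧ a = e1'.2.1 ∧ x₁' = φ e1'.2.2 := by
      rw [Prod.ext_iff, Prod.ext_iff] at heq1; exact ⟨heq1.1, heq1.2.1, heq1.2.2⟩
    obtain ⟨hr2, ha2, hy2⟩ : r₁' = φ e2'.1 ∧ a = e2'.2.1 ∧ y₁' = φ e2'.2.2 := by
      rw [Prod.ext_iff, Prod.ext_iff] at heq2; exact ⟨heq2.1, heq2.2.1, heq2.2.2⟩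
    have hrr : Fold G e1'.1 e2'.1 := ih e1'.1 e2'.1 hr1.symm hr2.symm
    have he1'' : (e1'.1, a, e1'.2.2) ∈ G.E := by rw [ha1]; exact he1'
    have he2'' : (e2'.1, a, e2'.2.2) ∈ G.E := by rw [ha2]; exact he2'
    have hmid : Fold G e1'.2.2 e2'.2.2 := Fold.move hrr he1'' he2''
    have h1 : Fold G x e1'.2.2 := fold_of_ident_eq hfib hpq (by rw [hx, hx1])
    have h2 : Fold G e2'.2.2 y := fold_of_ident_eq hfib hpq (by rw [hy, hy2])
    exact (h1.trans hmid).trans h2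

/-! ### The key invariant carried along reduction chains -/

structure GoodMap (S G : Autom A) (σ : S.Q → G.Q) : Prop where
  hom : S.IsHom G σ
  surj : Surjective σ
  esurj : ∀ e ∈ G.E, ∃ e' ∈ S.E, e = (σ e'.1, e'.2.1, σ e'.2.2)
  frefl : ∀ x y, Fold G (σ x) (σ y) → Fold S x y
  fib : ∀ z, (σ ⁻¹' {z}).Finite
  kfin : {pr : S.Q × S.Q | σ pr.1 = σ pr.2 ∧ pr.1 ≠ pr.2}.Finite

lemma GoodMap.ker {S G : Autom A} {σ : S.Q → G.Q} (h : GoodMap S G σ) {x y : S.Q}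
    (hxy : σ x = σ y) : Fold S x y :=
  h.frefl x y (hxy ▸ Fold.refl _)

lemma goodMap_id (S : Autom A) : GoodMap S S id := by
  refine ⟨⟨rfl, fun p a q h => h⟩, surjective_id, fun e he => ⟨e, he, rfl⟩,
    fun x y h => h, fun z => ?_, ?_⟩
  · exact (Set.finite_singleton z).subset (fun x hx => hx)
  · convert Set.finite_empty
    ext pr
    simp only [Set.mem_setOf_eq, id] at *
    tauto

lemma GoodMap.red1 {S G G₁ : Autom A} {σ : S.Q → G.Q} (hσ : GoodMap S G σ)
    (h : Red1 G G₁) : ∃ σ₁ : S.Q → G₁.Q, GoodMap S G₁ σ₁ := by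
  obtain ⟨p, q, r, a, hne, e1, e2, φ, hsurj, hq0, hfib, hE⟩ := h
  have hpq : Fold G p q := Fold.move (Fold.refl r) e1 e2
  have hφhom : G.IsHom G₁ φ := ⟨hq0, fun p' a' q' he => (hE _).2 ⟨(p', a', q'), he, rfl⟩⟩
  refine ⟨φ ∘ σ, ⟨(hφhom.1 ▸ congrArg φ hσ.hom.1 : φ (σ S.q0) = G₁.q0),
      fun p' a' q' he => hφhom.2 _ _ _ (hσ.hom.2 _ _ _ he)⟩,
    hsurj.comp hσ.surj, ?_, ?_, ?_, ?_⟩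
  · intro e he
    obtain ⟨e', he', heq⟩ := (hE _).1 he
    obtain ⟨e'', he'', heq'⟩ := hσ.esurj e' he'
    refine ⟨e'', he'', ?_⟩
    rw [heq, heq']
    rfl
  · intro x y hf
    exact hσ.frefl x y (fold_reflect_ident hsurj hfib hE hpq hf (σ x) (σ y) rfl rfl)
  · intro z
    obtain ⟨z₀, hz₀⟩ := hsurj z
    have hsub : (φ ∘ σ) ⁻¹' {z} ⊆ σ ⁻¹' {z₀} ∪ σ ⁻¹' {p} ∪ σ ⁻¹' {q} := by
      intro x hx
      simp only [Set.mem_preimage, Set.mem_singleton_iff, Function.comp] at hx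
      rcases (hfib (σ x) z₀).1 (hx.trans hz₀.symm) with h' | ⟨h1, _⟩ | ⟨h1, _⟩
      · exact Or.inl (Or.inl h')
      · exact Or.inl (Or.inr h1)
      · exact Or.inr h1
    exact (((hσ.fib z₀).union (hσ.fib p)).union (hσ.fib q)).subset hsub
  · have hsub : {pr : S.Q × S.Q | (φ ∘ σ) pr.1 = (φ ∘ σ) pr.2 ∧ pr.1 ≠ pr.2} ⊆
        {pr : S.Q × S.Q | σ pr.1 = σ pr.2 ∧ pr.1 ≠ pr.2} ∪
          (σ ⁻¹' {p}) ×ˢ (σ ⁻¹' {q}) ∪ (σ ⁻¹' {q}) ×ˢ (σ ⁻¹' {p}) := by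
      rintro ⟨x, y⟩ ⟨hxy, hne'⟩
      rcases (hfib (σ x) (σ y)).1 hxy with h' | ⟨h1, h2⟩ | ⟨h1, h2⟩
      · exact Or.inl (Or.inl ⟨h', hne'⟩)
      · exact Or.inl (Or.inr ⟨h1, h2⟩)
      · exact Or.inr ⟨h1, h2⟩
    exact ((hσ.kfin.union ((hσ.fib p).prod (hσ.fib q))).union
      ((hσ.fib q).prod (hσ.fib p))).subset hsub

/-! ### No state of a reduced automaton maps onto a type-2-deletable state -/

lemma sigma_ne_deletable {S G : Autom A} {σ : S.Q → G.Q} (hS : S.IsRed)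
    (hhom : S.IsHom G σ) {p q : G.Q} {a : Ltr A} (hq0 : q ≠ G.q0)
    (e1 : (p, a, q) ∈ G.E)
    (honly : ∀ e ∈ G.E, e.1 = q ∨ e.2.2 = q → e = (p, a, q) ∨ e = (q, Ltr.inv a, p)) :
    ∀ z, σ z ≠ q := by
  intro z hz
  obtain ⟨u, v, hred, hu, hv⟩ := hS z
  have hu' : G.Path G.q0 u q := by
    have := hom_path hhom hu; rwa [hhom.1, hz] at this
  have hv' : G.Path q v G.q0 := by
    have := hom_path hhom hv; rwa [hhom.1, hz] at this
  have hune : u ≠ [] := by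
    intro h; subst h; exact hq0 (path_nil_iff hu').symm
  have hvne : v ≠ [] := by
    intro h; subst h; exact hq0 (path_nil_iff hv')
  -- p ≠ q via the entry edge
  have hpne : p ≠ q := by
    obtain ⟨y', b', hy'ne, he'⟩ := path_entry hu' (Ne.symm hq0)
    rcases honly _ he' (Or.inr rfl) with h' | h'
    · have : y' = p := congrArg Prod.fst h'
      subst this; exact fun hpq => hy'ne hpq
    · exact absurd (congrArg Prod.fst h') hy'ne
  -- the last edge of u is (p, a, q)
  have hu'' : G.Path G.q0 (u.dropLast ++ [u.getLast hune]) q := by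
    rw [List.dropLast_append_getLast hune]; exact hu'
  obtain ⟨y, hy1, hy2⟩ := path_split hu'' 
  have hyedge : (y, u.getLast hune, q) ∈ G.E := path_single hy2
  have hlast : u.getLast hune = a := by
    rcases honly _ hyedge (Or.inr rfl) with h' | h'
    · exact congrArg (Prod.fst ∘ Prod.snd) h'
    · exact absurd (congrArg (Prod.snd ∘ Prod.snd) h').symm hpne
  -- the first edge of v is (q, a⁻¹, p)
  obtain ⟨c, v', hcv⟩ := List.exists_cons_of_ne_nil hvne
  obtain ⟨z', hz'edge, _⟩ := path_cons_iff (hcv ▸ hv')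
  have hfirst : c = Ltr.inv a := by
    rcases honly _ hz'edge (Or.inl rfl) with h' | h'
    · exact absurd (congrArg Prod.fst h').symm hpne
    · exact congrArg (Prod.fst ∘ Prod.snd) h'
  -- contradiction with reducedness
  apply hred u.dropLast v' a.1 a.2
  have heq : u ++ v = u.dropLast ++ [a] ++ (Ltr.inv a :: v') := by
    conv_lhs => rw [← List.dropLast_append_getLast hune, hcv]
    rw [hlast, hfirst]
  rw [heq]
  simp [Ltr.inv]
/-! ### Transport of GoodMap along type-2 reductions and isomorphisms -/

lemma GoodMap.red2 {S G G₂ : Autom A} {σ : S.Q → G.Q} (hσ : GoodMap S G σ)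
    (hS : S.IsRed) (h : Autom.Red2 G G₂) : ∃ σ₂ : S.Q → G₂.Q, GoodMap S G₂ σ₂ := by
  obtain ⟨p, q, a, hq0, e1, e2, honly, ψ, hψinj, hψrange, hψq0, hψE⟩ := h
  have hnq : ∀ z, σ z ≠ q := sigma_ne_deletable hS hσ.hom hq0 e1 honly
  have hψhom : G₂.IsHom G ψ := ⟨hψq0, fun p' a' q' he => (hψE _).1 he⟩
  have hex : ∀ z : S.Q, ∃ y, ψ y = σ z := by
    intro z
    have : σ z ∈ Set.range ψ := by rw [hψrange]; exact hnq z
    exact this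
  choose σ₂ hσ₂ using hex
  have hq0' : σ₂ S.q0 = G₂.q0 := by
    apply hψinj
    rw [hσ₂, hσ.hom.1, hψq0]
  refine ⟨σ₂, ⟨hq0', fun p' a' q' he => ?_⟩, ?_, ?_, ?_, ?_, ?_⟩
  · rw [hψE]
    show (ψ (σ₂ p'), a', ψ (σ₂ q')) ∈ G.E
    rw [hσ₂, hσ₂]
    exact hσ.hom.2 _ _ _ he
  · intro y
    have hy : ψ y ≠ q := by
      have : ψ y ∈ Set.range ψ := ⟨y, rfl⟩
      rw [hψrange] at this; exact this
    obtain ⟨z, hz⟩ := hσ.surj (ψ y)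
    exact ⟨z, hψinj (by rw [hσ₂, hz])⟩
  · intro e he
    have hGe : (ψ e.1, e.2.1, ψ e.2.2) ∈ G.E := (hψE _).1 he
    obtain ⟨e', he', heq⟩ := hσ.esurj _ hGe
    obtain ⟨h1, h2, h3⟩ : ψ e.1 = σ e'.1 ∧ e.2.1 = e'.2.1 ∧ ψ e.2.2 = σ e'.2.2 := by
      rw [Prod.ext_iff, Prod.ext_iff] at heq; exact ⟨heq.1, heq.2.1, heq.2.2⟩
    refine ⟨e', he', ?_⟩
    have c1 : e.1 = σ₂ e'.1 := hψinj (by rw [h1, hσ₂])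
    have c3 : e.2.2 = σ₂ e'.2.2 := hψinj (by rw [h3, hσ₂])
    rw [← c1, ← c3, ← h2]
  · intro x y hf
    have := Fold.map hψhom hf
    rw [hσ₂, hσ₂] at this
    exact hσ.frefl x y this
  · intro y
    have : σ₂ ⁻¹' {y} = σ ⁻¹' {ψ y} := by
      ext z
      simp only [Set.mem_preimage, Set.mem_singleton_iff]
      constructor
      · intro hz; rw [← hz, hσ₂]
      · intro hz; exact hψinj (by rw [hσ₂, hz])
    rw [this]; exact hσ.fib _
  · have : {pr : S.Q × S.Q | σ₂ pr.1 = σ₂ pr.2 ∧ pr.1 ≠ pr.2} ⊆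
        {pr : S.Q × S.Q | σ pr.1 = σ pr.2 ∧ pr.1 ≠ pr.2} := by
      rintro ⟨x, y⟩ ⟨hxy, hne⟩
      exact ⟨by rw [← hσ₂, ← hσ₂, hxy], hne⟩
    exact hσ.kfin.subset this

lemma GoodMap.iso {S G H : Autom A} {σ : S.Q → G.Q} (hσ : GoodMap S G σ)
    (hiso : Autom.Isomorphic G H) : ∃ σ' : S.Q → H.Q, GoodMap S H σ' := by
  obtain ⟨e, he1, he2⟩ := hiso
  have hsymm : ∀ z, e.symm (e z) = z := e.symm_apply_apply
  refine ⟨fun z => e (σ z), ⟨by show e (σ S.q0) = H.q0; rw [hσ.hom.1]; exact he1.1, fun p' a' q' h =>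
      he1.2 _ _ _ (hσ.hom.2 _ _ _ h)⟩, fun y => ?_, ?_, ?_, ?_, ?_⟩
  · obtain ⟨z, hz⟩ := hσ.surj (e.symm y)
    exact ⟨z, by rw [hz, e.apply_symm_apply]⟩
  · rintro ⟨x, a, y⟩ he'
    have hG : (e.symm x, a, e.symm y) ∈ G.E := he2.2 _ _ _ he'
    obtain ⟨e', hee', heq⟩ := hσ.esurj _ hG
    obtain ⟨h1, h2, h3⟩ : e.symm x = σ e'.1 ∧ a = e'.2.1 ∧ e.symm y = σ e'.2.2 := by
      rw [Prod.ext_iff, Prod.ext_iff] at heq; exact ⟨heq.1, heq.2.1, heq.2.2⟩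
    refine ⟨e', hee', ?_⟩
    rw [← h1, ← h2, ← h3, e.apply_symm_apply, e.apply_symm_apply]
  · intro x y hf
    have hsymmhom : H.IsHom G e.symm := he2
    have := Fold.map hsymmhom hf
    rw [hsymm, hsymm] at this
    exact hσ.frefl x y this
  · intro z
    have : (fun z => e (σ z)) ⁻¹' {z} = σ ⁻¹' {e.symm z} := by
      ext x
      simp only [Set.mem_preimage, Set.mem_singleton_iff]
      constructor
      · intro hx; rw [← hx, hsymm]
      · intro hx; rw [hx, e.apply_symm_apply]
    rw [this]; exact hσ.fib _
  · have : {pr : S.Q × S.Q | e (σ pr.1) = e (σ pr.2) ∧ pr.1 ≠ pr.2} ⊆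
        {pr : S.Q × S.Q | σ pr.1 = σ pr.2 ∧ pr.1 ≠ pr.2} := by
      rintro ⟨x, y⟩ ⟨hxy, hne⟩
      exact ⟨e.injective hxy, hne⟩
    exact hσ.kfin.subset this

lemma goodmap_chain1 {S G H : Autom A} (hch : Relation.ReflTransGen Autom.Red1 G H) :
    (∃ σ : S.Q → G.Q, GoodMap S G σ) → ∃ σ' : S.Q → H.Q, GoodMap S H σ' := by
  induction hch with
  | refl => exact id
  | tail _ hstep ih =>
    intro h
    obtain ⟨σ, hσ⟩ := ih h
    exact hσ.red1 hstep

lemma goodmap_chain2 {S G H : Autom A} (hS : S.IsRed)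
    (hch : Relation.ReflTransGen Autom.Red2 G H) :
    (∃ σ : S.Q → G.Q, GoodMap S G σ) → ∃ σ' : S.Q → H.Q, GoodMap S H σ' := by
  induction hch with
  | refl => exact id
  | tail _ hstep ih =>
    intro h
    obtain ⟨σ, hσ⟩ := ih h
    exact hσ.red2 hS hstep

lemma goodmap_reduction {G H K : Autom A} (hG : G.IsRed) (hred : Autom.ReductionOf G H)
    (hiso : Autom.Isomorphic H K) : ∃ σ : G.Q → K.Q, GoodMap G K σ := by
  obtain ⟨G₁, hch1, _, hch2, _⟩ := hred
  obtain ⟨σ, hσ⟩ := goodmap_chain2 hG hch2 (goodmap_chain1 hch1 ⟨id, goodMap_id G⟩)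
  exact hσ.iso hiso

/-! ### The master folding lemma -/

lemma master {A : Type} {X : Autom A} (hXdet : X.Deterministic) :
    ∀ (n : ℕ) (G : Autom A) (σ : G.Q → X.Q), G.IsHom X σ → Surjective σ →
      (∀ e ∈ X.E, ∃ e' ∈ G.E, e = (σ e'.1, e'.2.1, σ e'.2.2)) →
      (∀ x y, σ x = σ y → Fold G x y) →
      {pr : G.Q × G.Q | σ pr.1 = σ pr.2 ∧ pr.1 ≠ pr.2}.Finite →
      {pr : G.Q × G.Q | σ pr.1 = σ pr.2 ∧ pr.1 ≠ pr.2}.ncard = n →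
      ∃ G', Relation.ReflTransGen Autom.Red1 G G' ∧ G'.Deterministic ∧
        Autom.Isomorphic G' X := by
  intro n
  induction n using Nat.strong_induction_on with
  | _ n ih =>
    intro G σ hhom hsurj hesurj hker hfin hn
    by_cases h0 : {pr : G.Q × G.Q | σ pr.1 = σ pr.2 ∧ pr.1 ≠ pr.2} = ∅
    · -- σ is injective, hence an isomorphism
      have hinj : Injective σ := by
        intro x y hxy
        by_contra hne
        rw [Set.eq_empty_iff_forall_notMem] at h0
        exact h0 (x, y) ⟨hxy, hne⟩
      have hdet : G.Deterministic := by
        intro p' a' q' q'' h1 h2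
        exact hinj (hXdet _ _ _ _ (hhom.2 _ _ _ h1) (hhom.2 _ _ _ h2))
      refine ⟨G, Relation.ReflTransGen.refl, hdet,
        Equiv.ofBijective σ ⟨hinj, hsurj⟩, ⟨hhom.1, fun p' a' q' he => hhom.2 _ _ _ he⟩,
        ⟨?_, ?_⟩⟩
      · rw [Equiv.symm_apply_eq]
        exact hhom.1.symm
      · intro p' a' q' he
        obtain ⟨e', he', heq⟩ := hesurj (p', a', q') he
        obtain ⟨h1, h2, h3⟩ : p' = σ e'.1 ∧ a' = e'.2.1 ∧ q' = σ e'.2.2 := by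
          rw [Prod.ext_iff, Prod.ext_iff] at heq; exact ⟨heq.1, heq.2.1, heq.2.2⟩
        have hp : (Equiv.ofBijective σ ⟨hinj, hsurj⟩).symm p' = e'.1 := by
          rw [h1]; exact (Equiv.ofBijective σ ⟨hinj, hsurj⟩).symm_apply_apply e'.1
        have hq : (Equiv.ofBijective σ ⟨hinj, hsurj⟩).symm q' = e'.2.2 := by
          rw [h3]; exact (Equiv.ofBijective σ ⟨hinj, hsurj⟩).symm_apply_apply e'.2.2
        rw [hp, hq, h2]
        exact he'
    · -- fold one pair and recurse
      obtain ⟨⟨x, y⟩, hxy, hne⟩ := Set.nonempty_iff_ne_empty.2 h0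
      obtain ⟨p, q, r, a, hpq, e1, e2⟩ := fold_pair (hker x y hxy) hne
      have hσpq : σ p = σ q :=
        Fold.collapse_det hhom hXdet (Fold.move (Fold.refl r) e1 e2)
      set G₁ := identAut G hpq with hG₁
      set σ₁ : G₁.Q → X.Q := fun z => σ z.val with hσ₁
      have hval : ∀ z, σ (collapseMap p hpq z).val = σ z := by
        intro z
        unfold collapseMap
        by_cases hz : z = q
        · rw [dif_pos hz, hz]; exact hσpq
        · rw [dif_neg hz]
      have hhom₁ : G₁.IsHom X σ₁ := by
        constructor
        · show σ (collapseMap p hpq G.q0).val = X.q0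
          rw [hval]; exact hhom.1
        · intro p' a' q' he
          obtain ⟨e', he', heq⟩ := he
          obtain ⟨h1, h2, h3⟩ : p' = collapseMap p hpq e'.1 ∧ a' = e'.2.1 ∧
              q' = collapseMap p hpq e'.2.2 := by
            exact ⟨congrArg Prod.fst heq, congrArg (fun x => x.2.1) heq, congrArg (fun x => x.2.2) heq⟩
          have : (σ₁ p', a', σ₁ q') = (σ e'.1, e'.2.1, σ e'.2.2) := by
            rw [h1, h2, h3]
            show (σ (collapseMap p hpq e'.1).val, _, σ (collapseMap p hpq e'.2.2).val) = _
            rw [hval, hval]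
          rw [this]
          exact hhom.2 _ _ _ he'
      have hsurj₁ : Surjective σ₁ := by
        intro z
        obtain ⟨x', hx'⟩ := hsurj z
        exact ⟨collapseMap p hpq x', by rw [hσ₁]; simp only; rw [hval]; exact hx'⟩
      have hesurj₁ : ∀ e ∈ X.E, ∃ e' ∈ G₁.E, e = (σ₁ e'.1, e'.2.1, σ₁ e'.2.2) := by
        intro e he
        obtain ⟨e', he', heq⟩ := hesurj e he
        refine ⟨(collapseMap p hpq e'.1, e'.2.1, collapseMap p hpq e'.2.2),
          ⟨e', he', rfl⟩, ?_⟩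
        rw [heq]
        show _ = (σ (collapseMap p hpq e'.1).val, _, σ (collapseMap p hpq e'.2.2).val)
        rw [hval, hval]
      have hker₁ : ∀ u v : G₁.Q, σ₁ u = σ₁ v → Fold G₁ u v := by
        intro u v huv
        have hf : Fold G u.val v.val := hker _ _ huv
        have := Fold.map (ident_hom G hpq) hf
        rwa [show collapseMap p hpq u.val = u from collapseMap_val p hpq u,
          show collapseMap p hpq v.val = v from collapseMap_val p hpq v] at this
      -- counting
      set K := {pr : G.Q × G.Q | σ pr.1 = σ pr.2 ∧ pr.1 ≠ pr.2} with hK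
      set K₁ := {pr : G₁.Q × G₁.Q | σ₁ pr.1 = σ₁ pr.2 ∧ pr.1 ≠ pr.2} with hK₁
      set F : G₁.Q × G₁.Q → G.Q × G.Q := fun pr => (pr.1.val, pr.2.val) with hF
      have hFinj : Injective F := by
        rintro ⟨u1, u2⟩ ⟨v1, v2⟩ hEq
        have h1 : u1.val = v1.val := congrArg Prod.fst hEq
        have h2 : u2.val = v2.val := congrArg (fun pr => Prod.snd pr) hEq
        rw [Prod.ext_iff]
        exact ⟨Subtype.ext h1, Subtype.ext h2⟩
      have himg : F '' K₁ ⊆ K \ {(p, q)} := by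
        rintro _ ⟨⟨u, v⟩, ⟨huv, hne'⟩, rfl⟩
        refine ⟨⟨huv, fun hc => hne' (Subtype.ext hc)⟩, fun hc => ?_⟩
        exact v.prop (congrArg (fun pr => Prod.snd pr) hc)
      have hK₁fin : K₁.Finite :=
        Set.Finite.of_finite_image ((hfin.diff.subset himg)) hFinj.injOn
      have hmem : (p, q) ∈ K := ⟨hσpq, hpq⟩
      have hlt : K₁.ncard < n := by
        rw [← hn]
        calc K₁.ncard = (F '' K₁).ncard := (Set.ncard_image_of_injective K₁ hFinj).symm
          _ ≤ (K \ {(p, q)}).ncard := Set.ncard_le_ncard himg hfin.diff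
          _ < K.ncard := Set.ncard_diff_singleton_lt_of_mem hmem hfin
      obtain ⟨G', hch, hdet, hiso⟩ :=
        ih K₁.ncard hlt G₁ σ₁ hhom₁ hsurj₁ hesurj₁ hker₁ hK₁fin rfl
      have hstep : Autom.Red1 G G₁ := ⟨p, q, r, a, hpq, e1, e2, ident_spec G hpq⟩
      exact ⟨G', Relation.ReflTransGen.head hstep hch, hdet, hiso⟩

/-! ### Isomorphism utilities -/

lemma iso_symm {G H : Autom A} (h : Autom.Isomorphic G H) : Autom.Isomorphic H G := by
  obtain ⟨e, he1, he2⟩ := h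
  refine ⟨e.symm, he2, ?_⟩
  rw [Equiv.symm_symm]
  exact he1

lemma iso_trans {G H K : Autom A} (h1 : Autom.Isomorphic G H) (h2 : Autom.Isomorphic H K) :
    Autom.Isomorphic G K := by
  obtain ⟨e, he1, he2⟩ := h1
  obtain ⟨f, hf1, hf2⟩ := h2
  refine ⟨e.trans f, ⟨?_, fun p a q h => hf1.2 _ _ _ (he1.2 _ _ _ h)⟩,
    ⟨?_, fun p a q h => he2.2 _ _ _ (hf2.2 _ _ _ h)⟩⟩
  · show f (e G.q0) = K.q0
    rw [he1.1, hf1.1]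
  · show e.symm (f.symm K.q0) = G.q0
    rw [hf2.1, he2.1]

lemma red2_of_iso {G H Y : Autom A} (hiso : Autom.Isomorphic G H) (h : Autom.Red2 G Y) :
    Autom.Red2 H Y := by
  obtain ⟨e, he1, he2⟩ := hiso
  obtain ⟨p, q, a, hq0, e1, e2, honly, ψ, hψinj, hψrange, hψq0, hψE⟩ := h
  have hedge : ∀ x (a' : Ltr A) y, (x, a', y) ∈ G.E ↔ (e x, a', e y) ∈ H.E := by
    intro x a' y
    constructor
    · exact fun h' => he1.2 _ _ _ h'
    · intro h'
      have := he2.2 _ _ _ h'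
      rwa [e.symm_apply_apply, e.symm_apply_apply] at this
  refine ⟨e p, e q, a, ?_, (hedge _ _ _).1 e1, (hedge _ _ _).1 e2, ?_, ?_⟩
  · intro hc
    apply hq0
    have : e q = e G.q0 := by rw [hc, he1.1]
    exact e.injective this
  · rintro ⟨x, a', y⟩ he' hxy
    have hG : (e.symm x, a', e.symm y) ∈ G.E := he2.2 _ _ _ he'
    have hcond : (e.symm x, a', e.symm y).1 = q ∨ (e.symm x, a', e.symm y).2.2 = q := by
      rcases hxy with hx | hy
      · left
        have hx' : x = e q := hx
        show e.symm x = q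
        rw [hx']; exact e.symm_apply_apply q
      · right
        have hy' : y = e q := hy
        show e.symm y = q
        rw [hy']; exact e.symm_apply_apply q
    rcases honly _ hG hcond with hc | hc
    · left
      obtain ⟨h1, h2, h3⟩ : e.symm x = p ∧ a' = a ∧ e.symm y = q := by
        rw [Prod.ext_iff, Prod.ext_iff] at hc; exact ⟨hc.1, hc.2.1, hc.2.2⟩
      rw [Prod.ext_iff, Prod.ext_iff]
      refine ⟨?_, h2, ?_⟩
      · show x = e p; rw [← h1, e.apply_symm_apply]
      · show y = e q; rw [← h3, e.apply_symm_apply]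
    · right
      obtain ⟨h1, h2, h3⟩ : e.symm x = q ∧ a' = Ltr.inv a ∧ e.symm y = p := by
        rw [Prod.ext_iff, Prod.ext_iff] at hc; exact ⟨hc.1, hc.2.1, hc.2.2⟩
      rw [Prod.ext_iff, Prod.ext_iff]
      refine ⟨?_, h2, ?_⟩
      · show x = e q; rw [← h1, e.apply_symm_apply]
      · show y = e p; rw [← h3, e.apply_symm_apply]
  · obtain ⟨hψinj', hψrange', hψq0', hψE'⟩ := (⟨hψinj, hψrange, hψq0, hψE⟩ :
      Injective ψ ∧ Set.range ψ = {x | x ≠ q} ∧ ψ Y.q0 = G.q0 ∧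
        (∀ e' : Y.Q × Ltr A × Y.Q, e' ∈ Y.E ↔ (ψ e'.1, e'.2.1, ψ e'.2.2) ∈ G.E))
    refine ⟨fun z => e (ψ z), fun u v huv => hψinj (e.injective huv), ?_, ?_, ?_⟩
    · ext z
      simp only [Set.mem_range, Set.mem_setOf_eq]
      constructor
      · rintro ⟨u, rfl⟩
        intro hc
        have : ψ u = q := e.injective hc
        have hmem : ψ u ∈ Set.range ψ := ⟨u, rfl⟩
        rw [hψrange] at hmem
        exact hmem this
      · intro hz
        have : e.symm z ≠ q := by
          intro hc
          apply hz
          rw [← hc, e.apply_symm_apply]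
        have hmem : e.symm z ∈ Set.range ψ := by rw [hψrange]; exact this
        obtain ⟨u, hu⟩ := hmem
        exact ⟨u, by rw [hu, e.apply_symm_apply]⟩
    · show e (ψ Y.q0) = H.q0
      rw [hψq0, he1.1]
    · intro e'
      rw [hψE e']
      exact hedge _ _ _

lemma noRed2_of_iso {G H : Autom A} (hiso : Autom.Isomorphic G H)
    (h : ∀ Y, ¬ Autom.Red2 H Y) : ∀ Y, ¬ Autom.Red2 G Y :=
  fun Y hY => h Y (red2_of_iso hiso hY)
/-! ### Main lemma -/

lemma main {A : Type} (M N : Autom A)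
    (hMinv : M.IsInv) (hMred : M.IsRed) (hNinv : N.IsInv) (hNred : N.IsRed)
    (w : List (Ltr A)) (hw : w ≠ []) (hwred : IsReducedWord w)
    (h : M.EStep w N) :
    Autom.IStepAny M N ∨
      ∃ (p q : M.Q) (u : List (Ltr A)), IsReducedWord u ∧ u.length ≤ w.length ∧
        M.REStep p u q N := by
  classical
  have hkeep := h
  obtain ⟨hMdet, hMtrim, hMdual⟩ := hMinv
  obtain ⟨hNdet, hNtrim, hNdual⟩ := hNinv
  obtain ⟨N₁, N₂, hexp, hredOf, hisoN⟩ := h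
  set n := w.length with hn
  obtain ⟨-, φ, c, hφinj, hφq0, hc0, hclast, hcint, hcinj, hcover, hE⟩ := hexp
  have hnpos : 0 < n := List.length_pos_iff.2 hw
  set W : ℕ → Ltr A := fun i => w.getD i (w.head hw) with hWdef
  have hWget : ∀ (j : ℕ) (hj : j < n), w.get ⟨j, hj⟩ = W j := by
    intro j hj
    rw [hWdef]
    simp only
    rw [List.getD_eq_getElem _ _ hj]
    rfl
  -- adjacent letters of w do not cancel
  have hadj : ∀ j, j + 1 < n → W (j + 1) ≠ Ltr.inv (W j) := by
    intro j hj he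
    have := reduced_no_cancel hwred hj (by omega : j < n)
    rw [hWget j (by omega), hWget (j+1) hj] at this
    exact this he
  have hadj' : ∀ j, j + 1 < n → W j ≠ Ltr.inv (W (j + 1)) := by
    intro j hj
    exact Ltr.ne_inv_symm (hadj j hj)
  -- the new-path states as a function of ℕ
  set C : ℕ → N₁.Q := fun j => if h' : j ≤ n then c ⟨j, Nat.lt_succ_of_le h'⟩ else N₁.q0
    with hCdef
  have hCval : ∀ (j : ℕ) (hj : j ≤ n), C j = c ⟨j, Nat.lt_succ_of_le hj⟩ := by
    intro j hj; rw [hCdef]; simp only [dif_pos hj]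
  have hC0 : C 0 = φ M.q0 := by rw [hCval 0 (Nat.zero_le n)]; exact hc0
  have hCn : C n = φ M.q0 := by
    rw [hCval n (le_refl n)]
    have : (⟨n, Nat.lt_succ_of_le (le_refl n)⟩ : Fin (n+1)) = Fin.last n := rfl
    rw [this]
    exact hclast
  have hφhom : M.IsHom N₁ φ := by
    refine ⟨hφq0, fun p' a' q' he => ?_⟩
    exact (hE _).2 (Or.inl ⟨(p', a', q'), he, rfl⟩)
  have hCedge : ∀ j, j < n → (C j, W j, C (j + 1)) ∈ N₁.E := by
    intro j hj
    apply (hE _).2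
    right
    refine ⟨⟨j, hj⟩, Or.inl ?_⟩
    have h1 : C j = c (⟨j, hj⟩ : Fin n).castSucc := by
      rw [hCval j (le_of_lt hj)]; congr 1
    have h2 : C (j+1) = c (⟨j, hj⟩ : Fin n).succ := by
      rw [hCval (j+1) hj]; congr 1
    rw [h1, h2, hWget j hj]
  have hCedge' : ∀ j, j < n → (C (j + 1), Ltr.inv (W j), C j) ∈ N₁.E := by
    intro j hj
    apply (hE _).2
    right
    refine ⟨⟨j, hj⟩, Or.inr ?_⟩
    have h1 : C j = c (⟨j, hj⟩ : Fin n).castSucc := by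
      rw [hCval j (le_of_lt hj)]; congr 1
    have h2 : C (j+1) = c (⟨j, hj⟩ : Fin n).succ := by
      rw [hCval (j+1) hj]; congr 1
    rw [h1, h2, hWget j hj]
  have hCpath : ∀ j, j ≤ n → N₁.Path N₁.q0 (w.take j) (C j) := by
    intro j
    induction j with
    | zero =>
      intro _
      rw [List.take_zero, ← hφq0, ← hC0]
      exact Autom.PathOn.nil _
    | succ j ih =>
      intro hj
      have hj' : j < n := hj
      have hpre := ih (le_of_lt hj')
      have : w.take (j+1) = w.take j ++ [W j] := by
        rw [← List.take_concat_get' w j hj']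
        congr 2
        rw [← hWget j hj']
        rfl
      rw [this]
      exact path_append hpre (Autom.PathOn.cons (hCedge j hj') (Autom.PathOn.nil _))
  have hCpath2 : ∀ d j, j + d = n → N₁.Path (C j) (w.drop j) N₁.q0 := by
    intro d
    induction d with
    | zero =>
      intro j hj
      have hj' : j = n := by omega
      have hdrop : w.drop j = [] := by rw [hj', hn]; exact List.drop_length
      rw [hdrop]
      have hq : C j = N₁.q0 := by rw [hj', hCn, hφq0]
      rw [hq]
      exact Autom.PathOn.nil _
    | succ d ih =>
      intro j hj
      have hj' : j < n := by omega
      have : w.drop j = W j :: w.drop (j+1) := by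
        rw [List.drop_eq_getElem_cons hj']
        congr 1
        rw [← hWget j hj']
        rfl
      rw [this]
      exact Autom.PathOn.cons (hCedge j hj') (ih (j+1) (by omega))
  have hCpath2' : ∀ j, j ≤ n → N₁.Path (C j) (w.drop j) N₁.q0 := by
    intro j hj
    exact hCpath2 (n - j) j (by omega)
  have hN₁red : N₁.IsRed := by
    intro x
    rcases hcover x with ⟨z, hz⟩ | ⟨i, hi⟩
    · obtain ⟨u, v, hred, hu, hv⟩ := hMred z
      refine ⟨u, v, hred, ?_, ?_⟩
      · have := hom_path hφhom hu
        rwa [hφq0, hz] at this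
      · have := hom_path hφhom hv
        rwa [hφq0, hz] at this
    · refine ⟨w.take i.val, w.drop i.val, ?_, ?_, ?_⟩
      · rw [List.take_append_drop]; exact hwred
      · have := hCpath i.val (Nat.lt_succ_iff.mp i.isLt)
        rwa [hCval i.val (Nat.lt_succ_iff.mp i.isLt), Fin.eta, hi] at this
      · have := hCpath2' i.val (Nat.lt_succ_iff.mp i.isLt)
        rwa [hCval i.val (Nat.lt_succ_iff.mp i.isLt), Fin.eta, hi] at this
  -- maximal readable prefix
  set k := Nat.findGreatest (fun i => ∃ x, M.Path M.q0 (w.take i) x) n with hkdef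
  have hkle : k ≤ n := Nat.findGreatest_le n
  have hkspec : ∃ x, M.Path M.q0 (w.take k) x := by
    rw [hkdef]
    exact Nat.findGreatest_spec (P := fun i => ∃ x, M.Path M.q0 (w.take i) x)
      (Nat.zero_le n) ⟨M.q0, by rw [List.take_zero]; exact Autom.PathOn.nil _⟩
  have hkmax : ∀ i, k < i → i ≤ n → ¬∃ x, M.Path M.q0 (w.take i) x := by
    intro i h1 h2
    exact Nat.findGreatest_is_greatest h1 h2
  have hpre : ∀ i, i ≤ k → ∃ x, M.Path M.q0 (w.take i) x := by
    intro i hi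
    obtain ⟨x, hx⟩ := hkspec
    have hsplit : w.take k = w.take i ++ (w.take k).drop i := by
      conv_lhs => rw [← List.take_append_drop i (w.take k)]
      congr 1
      rw [List.take_take]
      congr 1
      omega
    rw [hsplit] at hx
    obtain ⟨y, hy, -⟩ := path_split hx
    exact ⟨y, hy⟩
  set pA : ℕ → M.Q := fun i =>
    if h' : ∃ x, M.Path M.q0 (w.take i) x then h'.choose else M.q0 with hpAdef
  have hpA : ∀ i, i ≤ k → M.Path M.q0 (w.take i) (pA i) := by
    intro i hi
    have h' := hpre i hi
    rw [hpAdef]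
    simp only [dif_pos h']
    exact h'.choose_spec
  have hpAu : ∀ i, i ≤ k → ∀ x, M.Path M.q0 (w.take i) x → x = pA i := by
    intro i hi x hx
    exact path_det hMdet hx (hpA i hi)
  have hpA0 : pA 0 = M.q0 := by
    have := hpA 0 (Nat.zero_le k)
    rw [List.take_zero] at this
    exact (path_nil_iff this).symm
  have hpAedge : ∀ i, i < k → (pA i, W i, pA (i + 1)) ∈ M.E := by
    intro i hi
    have hp := hpA (i+1) hi
    have : w.take (i+1) = w.take i ++ [W i] := by
      rw [← List.take_concat_get' w i (by omega)]
      congr 2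
      rw [← hWget i (by omega)]
      rfl
    rw [this] at hp
    obtain ⟨y, hy1, hy2⟩ := path_split hp
    have : y = pA i := hpAu i (by omega) y hy1
    subst this
    exact path_single hy2
  -- maximal readable suffix
  set m := Nat.findGreatest (fun j => ∃ x, M.Path x (w.drop (n - j)) M.q0) n with hmdef
  have hdropn : w.drop n = [] := by rw [hn]; exact List.drop_length
  have hmle : m ≤ n := Nat.findGreatest_le n
  have hmspec : ∃ x, M.Path x (w.drop (n - m)) M.q0 := by
    rw [hmdef]
    refine Nat.findGreatest_spec (P := fun j => ∃ x, M.Path x (w.drop (n - j)) M.q0)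
      (Nat.zero_le n) ⟨M.q0, ?_⟩
    have h0 : n - 0 = n := by omega
    rw [h0, hdropn]
    exact Autom.PathOn.nil _
  have hmmax : ∀ j, m < j → j ≤ n → ¬∃ x, M.Path x (w.drop (n - j)) M.q0 := by
    intro j h1 h2
    exact Nat.findGreatest_is_greatest h1 h2
  have hsuf : ∀ j, j ≤ m → ∃ x, M.Path x (w.drop (n - j)) M.q0 := by
    intro j hj
    obtain ⟨x, hx⟩ := hmspec
    have hsplit : w.drop (n - m) =
        (w.drop (n - m)).take ((n - j) - (n - m)) ++ w.drop (n - j) := by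
      conv_lhs => rw [← List.take_append_drop ((n - j) - (n - m)) (w.drop (n - m))]
      congr 1
      rw [List.drop_drop]
      congr 1
      omega
    rw [hsplit] at hx
    obtain ⟨y, -, hy⟩ := path_split hx
    exact ⟨y, hy⟩
  set sB : ℕ → M.Q := fun j =>
    if h' : ∃ x, M.Path x (w.drop (n - j)) M.q0 then h'.choose else M.q0 with hsBdef
  have hsB : ∀ j, j ≤ m → M.Path (sB j) (w.drop (n - j)) M.q0 := by
    intro j hj
    have h' := hsuf j hj
    rw [hsBdef]
    simp only [dif_pos h']
    exact h'.choose_spec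
  have hsBu : ∀ j, j ≤ m → ∀ x, M.Path x (w.drop (n - j)) M.q0 → x = sB j := by
    intro j hj x hx
    exact path_codet hMdet hMdual hx (hsB j hj)
  have hsB0 : sB 0 = M.q0 := by
    have := hsB 0 (Nat.zero_le m)
    have h0 : n - 0 = n := by omega
    rw [h0, hdropn] at this
    exact path_nil_iff this
  have hsBedge : ∀ j, j < m → (sB (j + 1), W (n - j - 1), sB j) ∈ M.E := by
    intro j hj
    have hp := hsB (j+1) hj
    have hlt : n - j - 1 < n := by omega
    have : w.drop (n - (j+1)) = W (n - j - 1) :: w.drop (n - j) := by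
      have h1 : n - (j+1) = n - j - 1 := by omega
      rw [h1, List.drop_eq_getElem_cons hlt]
      have h2 : n - j - 1 + 1 = n - j := by omega
      rw [h2]
      congr 1
      rw [← hWget _ hlt]
      rfl
    rw [this] at hp
    obtain ⟨y, hy1, hy2⟩ := path_cons_iff hp
    have : y = sB j := hsBu j (by omega) y hy2
    subst this
    exact hy1
  -- the canonical homomorphism N₁ → N and its properties
  obtain ⟨πh, hgood⟩ := goodmap_reduction hN₁red hredOf hisoN
  have hπ₀hom : M.IsHom N (fun z => πh (φ z)) := by
    refine ⟨?_, fun p' a' q' he => hgood.hom.2 _ _ _ (hφhom.2 _ _ _ he)⟩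
    show πh (φ M.q0) = N.q0
    rw [hφq0]
    exact hgood.hom.1
  set π₀ : M.Q → N.Q := fun z => πh (φ z) with hπ₀def
  have hπC : ∀ j, j ≤ n → N.Path N.q0 (w.take j) (πh (C j)) := by
    intro j hj
    have := hom_path hgood.hom (hCpath j hj)
    rwa [hgood.hom.1] at this
  have hπC2 : ∀ j, j ≤ n → N.Path (πh (C j)) (w.drop j) N.q0 := by
    intro j hj
    have := hom_path hgood.hom (hCpath2' j hj)
    rwa [hgood.hom.1] at this
  have hπp : ∀ i, i ≤ k → π₀ (pA i) = πh (C i) := by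
    intro i hi
    have h1 := hom_path hπ₀hom (hpA i hi)
    rw [hπ₀hom.1] at h1
    exact path_det hNdet h1 (hπC i (le_trans hi hkle))
  have hπs : ∀ j, j ≤ m → π₀ (sB j) = πh (C (n - j)) := by
    intro j hj
    have h1 := hom_path hπ₀hom (hsB j hj)
    rw [hπ₀hom.1] at h1
    exact path_codet hNdet hNdual h1 (hπC2 (n - j) (by omega))
  -- classification of the states of N₁
  have hCrange : ∀ j, 0 < j → j < n → ¬∃ z, φ z = C j := by
    intro j h1 h2 ⟨z, hz⟩
    have := hcint ⟨j, by omega⟩ h1 h2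
    rw [← hCval j (by omega)] at this
    exact this ⟨z, hz⟩
  have hCuniq : ∀ j j', 0 < j → j < n → j' ≤ n → C j' = C j → j' = j := by
    intro j j' h1 h2 h3 heq
    have := hcinj ⟨j, by omega⟩ ⟨j', by omega⟩ h1 h2
      (by rw [← hCval j (by omega), ← hCval j' h3]; exact heq.symm)
    have := Fin.val_eq_val .. |>.2 this.symm
    exact this
  by_cases hcase : ∃ i, i ≤ k ∧ n ≤ i + m ∧ pA i ≠ sB (n - i)
  · -- Branch A: an i-step applies
    left
    obtain ⟨i, hik, him, hine⟩ := hcase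
    set θM := collapseMap (pA i) hine with hθMdef
    set M₁ := identAut M hine with hM₁def
    set lam : ℕ → M.Q := fun j => if j ≤ i then pA j else sB (n - j) with hlamdef
    have hinm : n - i ≤ m := by omega
    have hlamA : ∀ j, j ≤ i → lam j = pA j := by
      intro j hj; rw [hlamdef]; simp only [if_pos hj]
    have hlamB : ∀ j, ¬ j ≤ i → lam j = sB (n - j) := by
      intro j hj; rw [hlamdef]; simp only [if_neg hj]
    have hθMpq : θM (sB (n - i)) = θM (pA i) := by
      rw [hθMdef]
      unfold collapseMap
      rw [dif_pos rfl, dif_neg hine]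
    have hlamedgeM : ∀ j, j < n → ∃ x y, (x, W j, y) ∈ M.E ∧
        θM x = θM (lam j) ∧ θM y = θM (lam (j + 1)) := by
      intro j hj
      by_cases hji : j < i
      · refine ⟨pA j, pA (j+1), hpAedge j (by omega), ?_, ?_⟩
        · rw [hlamA j (by omega)]
        · rw [hlamA (j+1) (by omega)]
      · have h1 : n - j - 1 < m := by omega
        have hedge := hsBedge (n - j - 1) h1
        have e1 : n - j - 1 + 1 = n - j := by omega
        have e2 : n - (n - j - 1) - 1 = j := by omega
        rw [e1, e2] at hedge
        refine ⟨sB (n - j), sB (n - j - 1), hedge, ?_, ?_⟩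
        · by_cases hji2 : j ≤ i
          · have : j = i := by omega
            subst this
            rw [hlamA j (le_refl j), hθMpq]
          · rw [hlamB j hji2]
        · rw [hlamB (j+1) (by omega)]
          have he3 : n - (j+1) = n - j - 1 := by omega
          rw [he3]
    set θ : N₁.Q → M₁.Q := fun x =>
      if hx : ∃ z, φ z = x then θM hx.choose
      else if hx2 : ∃ j, 0 < j ∧ j < n ∧ C j = x then θM (lam hx2.choose) else M₁.q0
      with hθdef
    have hθφ : ∀ z, θ (φ z) = θM z := by
      intro z
      have hx : ∃ z', φ z' = φ z := ⟨z, rfl⟩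
      simp only [hθdef, dif_pos hx]
      exact (dif_pos hx).trans (congrArg θM (hφinj hx.choose_spec))
    have hθMlam0 : θM (lam 0) = θM M.q0 := by
      rw [hlamA 0 (Nat.zero_le i), hpA0]
    have hθMlamn : θM (lam n) = θM M.q0 := by
      by_cases hni : n ≤ i
      · rw [hlamA n hni]
        have hin : pA n = pA i := by rw [(by omega : i = n)]
        rw [hin, ← hθMpq]
        refine congrArg θM ?_
        have h0 : n - i = 0 := by omega
        rw [h0, hsB0]
      · rw [hlamB n hni]
        refine congrArg θM ?_
        have h0 : n - n = 0 := by omega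
        rw [h0, hsB0]
    have hθC : ∀ j, j ≤ n → θ (C j) = θM (lam j) := by
      intro j hj
      rcases Nat.eq_zero_or_pos j with h0 | hpos
      · subst h0
        rw [hC0, hθφ, hθMlam0]
      · by_cases hjn : j = n
        · subst hjn
          rw [hCn, hθφ, hθMlamn]
        · have hjn' : j < n := by omega
          have hx2 : ∃ j', 0 < j' ∧ j' < n ∧ C j' = C j := ⟨j, hpos, hjn', rfl⟩
          simp only [hθdef, dif_neg (hCrange j hpos hjn'), dif_pos hx2]
          have heq2 : hx2.choose = j :=
            hCuniq j hx2.choose hpos hjn' (by omega) hx2.choose_spec.2.2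
          exact (dif_neg (hCrange j hpos hjn')).trans
            ((dif_pos hx2).trans (congrArg (fun t => θM (lam t)) heq2))
    have hθhom : N₁.IsHom M₁ θ := by
      constructor
      · rw [← hφq0, hθφ]
        rfl
      · intro p' a' q' he
        rcases (hE _).1 he with ⟨e', he', heq⟩ | ⟨iF, hF⟩
        · obtain ⟨h1, h2, h3⟩ : p' = φ e'.1 ∧ a' = e'.2.1 ∧ q' = φ e'.2.2 := by
            rw [Prod.ext_iff, Prod.ext_iff] at heq; exact ⟨heq.1, heq.2.1, heq.2.2⟩
          rw [h1, h2, h3, hθφ, hθφ]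
          exact (ident_hom M hine).2 _ _ _ he'
        · have hjn : (iF : ℕ) < n := iF.isLt
          have hcast : c iF.castSucc = C iF.val := by
            rw [hCval iF.val (by omega)]; congr 1
          have hsucc : c iF.succ = C (iF.val + 1) := by
            rw [hCval (iF.val + 1) (by omega)]; congr 1
          obtain ⟨x, y, hedge, hx, hy⟩ := hlamedgeM iF.val hjn
          rcases hF with hF | hF
          · obtain ⟨h1, h2, h3⟩ : p' = c iF.castSucc ∧ a' = w.get iF ∧ q' = c iF.succ := by
              rw [Prod.ext_iff, Prod.ext_iff] at hF; exact ⟨hF.1, hF.2.1, hF.2.2⟩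
            rw [h1, h2, h3, hcast, hsucc, hθC _ (by omega), hθC _ (by omega),
              hWget iF.val hjn, ← hx, ← hy]
            exact (ident_hom M hine).2 _ _ _ hedge
          · obtain ⟨h1, h2, h3⟩ : p' = c iF.succ ∧ a' = Ltr.inv (w.get iF) ∧
                q' = c iF.castSucc := by
              rw [Prod.ext_iff, Prod.ext_iff] at hF; exact ⟨hF.1, hF.2.1, hF.2.2⟩
            rw [h1, h2, h3, hcast, hsucc, hθC _ (by omega), hθC _ (by omega),
              hWget iF.val hjn, ← hx, ← hy]
            exact (ident_hom M hine).2 _ _ _ ((hMdual _ _ _).1 hedge)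
    set g : M₁.Q → N.Q := fun z => π₀ z.val with hgdef
    have hπpq : π₀ (pA i) = π₀ (sB (n - i)) := by
      rw [hπp i hik, hπs (n - i) hinm]
      congr 2
      omega
    have hgval : ∀ z, g (θM z) = π₀ z := by
      intro z
      rw [hgdef, hθMdef]
      simp only
      unfold collapseMap
      by_cases hz : z = sB (n - i)
      · rw [dif_pos hz]
        simp only
        rw [hπpq, hz]
      · rw [dif_neg hz]
    have hπlam : ∀ j, j ≤ n → π₀ (lam j) = πh (C j) := by
      intro j hj
      by_cases hji : j ≤ i
      · rw [hlamA j hji, hπp j (by omega)]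
      · rw [hlamB j hji, hπs (n - j) (by omega)]
        congr 2
        omega
    have hgθ : ∀ x, g (θ x) = πh x := by
      intro x
      rcases hcover x with ⟨z, hz⟩ | ⟨iF, hiF⟩
      · rw [← hz, hθφ, hgval]
      · have hle : (iF : ℕ) ≤ n := Nat.lt_succ_iff.mp iF.isLt
        have hCx : C iF.val = x := by rw [hCval iF.val hle, Fin.eta, hiF]
        rw [← hCx, hθC iF.val hle, hgval, hπlam iF.val hle]
    have hghom : M₁.IsHom N g := by
      constructor
      · have : M₁.q0 = θM M.q0 := rfl
        rw [this, hgval]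
        exact hπ₀hom.1
      · intro p' a' q' he
        obtain ⟨e', he', heq⟩ := he
        obtain ⟨h1, h2, h3⟩ : p' = θM e'.1 ∧ a' = e'.2.1 ∧ q' = θM e'.2.2 := by
          exact ⟨congrArg Prod.fst heq, congrArg (fun x => x.2.1) heq, congrArg (fun x => x.2.2) heq⟩
        rw [h1, h2, h3, hgval, hgval]
        exact hπ₀hom.2 _ _ _ he'
    have hgsurj : Surjective g := by
      intro y
      obtain ⟨x, hx⟩ := hgood.surj y
      exact ⟨θ x, by rw [hgθ, hx]⟩
    have hgesurj : ∀ e ∈ N.E, ∃ e' ∈ M₁.E, e = (g e'.1, e'.2.1, g e'.2.2) := by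
      intro e he
      obtain ⟨e', he', heq⟩ := hgood.esurj e he
      refine ⟨(θ e'.1, e'.2.1, θ e'.2.2), hθhom.2 _ _ _ (by
        have : e' = (e'.1, e'.2.1, e'.2.2) := rfl
        rw [this] at he'; exact he'), ?_⟩
      rw [heq]
      show _ = (g (θ e'.1), e'.2.1, g (θ e'.2.2))
      rw [hgθ, hgθ]
    have hgker : ∀ z1 z2, g z1 = g z2 → Fold M₁ z1 z2 := by
      intro z1 z2 hz
      have hF : Fold N₁ (φ z1.val) (φ z2.val) := hgood.ker hz
      have := Fold.map hθhom hF
      rw [hθφ, hθφ] at this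
      rwa [hθMdef, show collapseMap (pA i) hine z1.val = z1 from collapseMap_val (pA i) hine z1,
        show collapseMap (pA i) hine z2.val = z2 from collapseMap_val (pA i) hine z2] at this
    have hgkfin : {pr : M₁.Q × M₁.Q | g pr.1 = g pr.2 ∧ pr.1 ≠ pr.2}.Finite := by
      set F2 : M₁.Q × M₁.Q → N₁.Q × N₁.Q := fun pr => (φ pr.1.val, φ pr.2.val) with hF2
      have hF2inj : Injective F2 := by
        rintro ⟨u1, u2⟩ ⟨v1, v2⟩ hEq
        have h1 : φ u1.val = φ v1.val := congrArg Prod.fst hEq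
        have h2 : φ u2.val = φ v2.val := congrArg (fun pr => Prod.snd pr) hEq
        rw [Prod.ext_iff]
        exact ⟨Subtype.ext (hφinj h1), Subtype.ext (hφinj h2)⟩
      have himg2 : F2 '' {pr : M₁.Q × M₁.Q | g pr.1 = g pr.2 ∧ pr.1 ≠ pr.2} ⊆
          {pr : N₁.Q × N₁.Q | πh pr.1 = πh pr.2 ∧ pr.1 ≠ pr.2} := by
        rintro _ ⟨⟨u, v⟩, ⟨huv, hne'⟩, rfl⟩
        refine ⟨huv, fun hc => hne' ?_⟩
        have h1 : φ u.val = φ v.val := hc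
        show u = v
        exact Subtype.ext (hφinj h1)
      exact Set.Finite.of_finite_image (hgood.kfin.subset himg2) hF2inj.injOn
    obtain ⟨G', hch, hdetG', hisoG'⟩ := master hNdet
      {pr : M₁.Q × M₁.Q | g pr.1 = g pr.2 ∧ pr.1 ≠ pr.2}.ncard M₁ g hghom hgsurj
      hgesurj hgker hgkfin rfl
    obtain ⟨D, hch1, hdet1, hch2, hnored⟩ := hredOf
    have hnored' : ∀ Y, ¬ Autom.Red2 G' Y :=
      noRed2_of_iso (iso_trans hisoG' (iso_symm hisoN)) hnored
    exact ⟨pA i, sB (n - i), hine, M₁, G', ident_spec M hine,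
      ⟨G', hch, hdetG', Relation.ReflTransGen.refl, hnored'⟩, hisoG'⟩
  · -- Branch B: M embeds in N
    right
    push_neg at hcase
    have hinj : Injective π₀ := by
      intro u v huv
      have hFuv : Fold N₁ (φ u) (φ v) := hgood.ker huv
      -- generic collapsing argument via a deterministic labeling
      have hgen : ∀ (mid : ℕ → M.Q ⊕ ℕ) (δ2 : (M.Q ⊕ ℕ) → Ltr A → Option (M.Q ⊕ ℕ)),
          (∀ z a y, (z, a, y) ∈ M.E → δ2 (Sum.inl z) a = some (Sum.inl y)) →
          mid 0 = Sum.inl M.q0 → mid n = Sum.inl M.q0 →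
          (∀ j, j < n → δ2 (mid j) (W j) = some (mid (j+1))) →
          (∀ j, j < n → δ2 (mid (j+1)) (Ltr.inv (W j)) = some (mid j)) →
          u = v := by
        intro mid δ2 hδM hmid0 hmidn hfor hback
        set ξ : N₁.Q → M.Q ⊕ ℕ := fun x =>
          if hx : ∃ z, φ z = x then Sum.inl hx.choose
          else if hx2 : ∃ j, 0 < j ∧ j < n ∧ C j = x then mid hx2.choose else Sum.inl M.q0
          with hξdef
        have hξφ : ∀ z, ξ (φ z) = Sum.inl z := by
          intro z
          have hx : ∃ z', φ z' = φ z := ⟨z, rfl⟩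
          simp only [hξdef, dif_pos hx]
          exact congrArg Sum.inl (hφinj hx.choose_spec)
        have hξC : ∀ j, j ≤ n → ξ (C j) = mid j := by
          intro j hj
          rcases Nat.eq_zero_or_pos j with h0 | hpos
          · subst h0
            rw [hC0, hξφ, hmid0]
          · by_cases hjn : j = n
            · subst hjn
              rw [hCn, hξφ, hmidn]
            · have hjn' : j < n := by omega
              have hx2 : ∃ j', 0 < j' ∧ j' < n ∧ C j' = C j := ⟨j, hpos, hjn', rfl⟩
              simp only [hξdef, dif_neg (hCrange j hpos hjn'), dif_pos hx2]
              have heq2 : hx2.choose = j :=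
                hCuniq j hx2.choose hpos hjn' (by omega) hx2.choose_spec.2.2
              rw [heq2]
        have hcompat : ∀ e ∈ N₁.E, δ2 (ξ e.1) e.2.1 = some (ξ e.2.2) := by
          intro e he
          rcases (hE e).1 he with ⟨e', he', heq⟩ | ⟨iF, hF⟩
          · obtain ⟨x, a, y⟩ := e'
            subst heq
            show δ2 (ξ (φ x)) a = some (ξ (φ y))
            rw [hξφ, hξφ]
            exact hδM _ _ _ he'
          · have hjn : (iF : ℕ) < n := iF.isLt
            have hcast : c iF.castSucc = C iF.val := by
              rw [hCval iF.val (by omega)]; congr 1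
            have hsucc : c iF.succ = C (iF.val + 1) := by
              rw [hCval (iF.val + 1) (by omega)]; congr 1
            rcases hF with hF | hF
            · subst hF
              show δ2 (ξ (c iF.castSucc)) (w.get iF) = some (ξ (c iF.succ))
              rw [hcast, hsucc, hξC _ (by omega), hξC _ (by omega), hWget iF.val hjn]
              exact hfor iF.val hjn
            · subst hF
              show δ2 (ξ (c iF.succ)) (Ltr.inv (w.get iF)) = some (ξ (c iF.castSucc))
              rw [hcast, hsucc, hξC _ (by omega), hξC _ (by omega), hWget iF.val hjn]
              exact hback iF.val hjn
        have hcol := Fold.collapse ξ δ2 hcompat hFuv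
        rw [hξφ, hξφ] at hcol
        exact Sum.inl_injective hcol
      by_cases hkm : n ≤ k + m
      · -- B1: w labels a loop of M at the base point
        set lam : ℕ → M.Q := fun j => if j ≤ k then pA j else sB (n - j) with hlamdef
        have hlamA : ∀ j, j ≤ k → lam j = pA j := by
          intro j hj; rw [hlamdef]; simp only [if_pos hj]
        have hlamB : ∀ j, ¬ j ≤ k → lam j = sB (n - j) := by
          intro j hj; rw [hlamdef]; simp only [if_neg hj]
        have hlam0 : lam 0 = M.q0 := by rw [hlamA 0 (Nat.zero_le k), hpA0]
        have hlamn : lam n = M.q0 := by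
          by_cases hnk : n ≤ k
          · rw [hlamA n hnk]
            have := hcase n (by omega) (by omega)
            rw [this]
            have h0 : n - n = 0 := by omega
            rw [h0, hsB0]
          · rw [hlamB n hnk]
            have h0 : n - n = 0 := by omega
            rw [h0, hsB0]
        have hlamedge : ∀ j, j < n → (lam j, W j, lam (j + 1)) ∈ M.E := by
          intro j hj
          by_cases hjk : j < k
          · rw [hlamA j (by omega), hlamA (j+1) (by omega)]
            exact hpAedge j hjk
          · have h1 : n - j - 1 < m := by omega
            have hedge := hsBedge (n - j - 1) h1
            have e1 : n - j - 1 + 1 = n - j := by omega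
            have e2 : n - (n - j - 1) - 1 = j := by omega
            rw [e1, e2] at hedge
            have hl2 : lam (j+1) = sB (n - j - 1) := by
              rw [hlamB (j+1) (by omega)]
              have : n - (j+1) = n - j - 1 := by omega
              rw [this]
            rw [hl2]
            by_cases hjk2 : j ≤ k
            · have hjeq : j = k := by omega
              rw [hlamA j hjk2]
              have h3 : pA j = sB (n - j) := by
                rw [hjeq]
                exact hcase k (le_refl k) (by omega)
              rw [h3]
              exact hedge
            · rw [hlamB j hjk2]
              exact hedge
        set δ1 : (M.Q ⊕ ℕ) → Ltr A → Option (M.Q ⊕ ℕ) := fun s a => Sum.elim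
          (fun z => if hz : ∃ y, (z, a, y) ∈ M.E then some (Sum.inl hz.choose) else none)
          (fun _ => none) s with hδ1def
        have hδ1M : ∀ z a y, (z, a, y) ∈ M.E → δ1 (Sum.inl z) a = some (Sum.inl y) := by
          intro z a y he
          have hz : ∃ y', (z, a, y') ∈ M.E := ⟨y, he⟩
          simp only [hδ1def, Sum.elim_inl, dif_pos hz]
          exact congrArg (some ∘ Sum.inl) (hMdet _ _ _ _ hz.choose_spec he)
        apply hgen (fun j => Sum.inl (lam j)) δ1 hδ1M
          (congrArg Sum.inl hlam0) (congrArg Sum.inl hlamn)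
        · intro j hj
          exact hδ1M _ _ _ (hlamedge j hj)
        · intro j hj
          exact hδ1M _ _ _ ((hMdual _ _ _).1 (hlamedge j hj))
      · -- B2: the new path does not fold entirely into M
        have hkmlt : k + m < n := by omega
        set L := n - k - m with hLdef
        have hL1 : 1 ≤ L := by omega
        have hknomax : ¬∃ y, (pA k, W k, y) ∈ M.E := by
          rintro ⟨y, hy⟩
          apply hkmax (k+1) (by omega) (by omega)
          refine ⟨y, ?_⟩
          have htake : w.take (k+1) = w.take k ++ [W k] := by
            rw [← List.take_concat_get' w k (by omega)]
            congr 2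
            rw [← hWget k (by omega)]
            rfl
          rw [htake]
          exact path_append (hpA k (le_refl k)) (Autom.PathOn.cons hy (Autom.PathOn.nil _))
        have hmnomax : ¬∃ y, (y, W (n-m-1), sB m) ∈ M.E := by
          rintro ⟨y, hy⟩
          apply hmmax (m+1) (by omega) (by omega)
          refine ⟨y, ?_⟩
          have hdrop : w.drop (n-(m+1)) = W (n-m-1) :: w.drop (n-m) := by
            have h1 : n - (m+1) = n - m - 1 := by omega
            rw [h1, List.drop_eq_getElem_cons (by omega : n - m - 1 < n)]
            have h2 : n - m - 1 + 1 = n - m := by omega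
            rw [h2]
            congr 1
            rw [← hWget _ (by omega : n - m - 1 < n)]
            rfl
          rw [hdrop]
          exact Autom.PathOn.cons hy (hsB m (le_refl m))
        have hmnomax' : ¬∃ y, (sB m, Ltr.inv (W (n-m-1)), y) ∈ M.E := by
          rintro ⟨y, hy⟩
          refine hmnomax ⟨y, ?_⟩
          have := (hMdual _ _ _).1 hy
          rwa [Ltr.inv_inv] at this
        have hsBedge' : ∀ j, n - m ≤ j → j < n → (sB (n-j), W j, sB (n-j-1)) ∈ M.E := by
          intro j hj1 hj2
          have h1 : n - j - 1 < m := by omega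
          have hedge := hsBedge (n - j - 1) h1
          have e1 : n - j - 1 + 1 = n - j := by omega
          have e2 : n - (n - j - 1) - 1 = j := by omega
          rw [e1, e2] at hedge
          exact hedge
        have hpAdual : ∀ j, j < k → (pA (j+1), Ltr.inv (W j), pA j) ∈ M.E := by
          intro j hj
          exact (hMdual _ _ _).1 (hpAedge j hj)
        have hsBdual' : ∀ j, n - m ≤ j → j < n →
            (sB (n-j-1), Ltr.inv (W j), sB (n-j)) ∈ M.E := by
          intro j hj1 hj2
          exact (hMdual _ _ _).1 (hsBedge' j hj1 hj2)
        by_cases hv : pA k = sB m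
        · -- B2b : lollipop case
          set P : ℕ → Prop := fun j => 2*j ≤ L ∧
            (∀ d, d < j → W (k+d) = Ltr.inv (W (k + (L-1-d)))) with hPdef
          set js := Nat.findGreatest P L with hjsdef
          have hjsle : js ≤ L := Nat.findGreatest_le L
          have hjsP : P js := by
            rw [hjsdef]
            exact Nat.findGreatest_spec (Nat.zero_le L)
              (⟨by omega, fun d hd => absurd hd (Nat.not_lt_zero d)⟩ : P 0)
          have hjsmax : ∀ j', js < j' → j' ≤ L → ¬ P j' := fun j' h1 h2 =>
            Nat.findGreatest_is_greatest h1 h2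
          have hMATCH : ∀ d, d < js → W (k+d) = Ltr.inv (W (k + (L-1-d))) := hjsP.2
          have hjs2 : 2*js < L := by
            rcases Nat.lt_or_ge (2*js) L with hlt | hge
            · exact hlt
            · exfalso
              have heq : 2*js = L := by omega
              have hjs1 : 1 ≤ js := by omega
              have hm := hMATCH (js-1) (by omega)
              have hidx : L - 1 - (js-1) = js := by omega
              rw [hidx] at hm
              refine hadj' (k+(js-1)) (by omega) ?_
              rw [(by omega : k + (js-1) + 1 = k + js)]
              exact hm
          have hstop : L - 2*js = 1 ∨ W (k+js) ≠ Ltr.inv (W (k + (L-1-js))) := by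
            by_cases hT : L - 2*js = 1
            · exact Or.inl hT
            · right
              intro hMjs
              apply hjsmax (js+1) (by omega) (by omega)
              refine ⟨by omega, fun d hd => ?_⟩
              rcases Nat.lt_or_ge d js with hlt | hge
              · exact hMATCH d hlt
              · rw [(by omega : d = js)]
                exact hMjs
          set mf : ℕ → ℕ := fun d => if d < L - js then d else L - d with hmfdef
          have hmflt : ∀ d, d < L - js → mf d = d := by
            intro d hd; rw [hmfdef]; simp only [if_pos hd]
          have hmfge : ∀ d, ¬ d < L - js → mf d = L - d := by
            intro d hd; rw [hmfdef]; simp only [if_neg hd]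
          set midB : ℕ → M.Q ⊕ ℕ := fun j =>
            if j ≤ k then Sum.inl (pA j)
            else if n - m ≤ j then Sum.inl (sB (n - j)) else Sum.inr (mf (j - k))
            with hmidBdef
          have hmidB1 : ∀ j, j ≤ k → midB j = Sum.inl (pA j) := by
            intro j hj; rw [hmidBdef]; simp only [if_pos hj]
          have hmidB2 : ∀ j, n - m ≤ j → midB j = Sum.inl (sB (n - j)) := by
            intro j hj
            rw [hmidBdef]
            simp only [if_neg (by omega : ¬ j ≤ k), if_pos hj]
          have hmidB3 : ∀ j, k < j → j < n - m → midB j = Sum.inr (mf (j - k)) := by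
            intro j hj1 hj2
            rw [hmidBdef]
            simp only [if_neg (by omega : ¬ j ≤ k), if_neg (by omega : ¬ n - m ≤ j)]
          set δB : (M.Q ⊕ ℕ) → Ltr A → Option (M.Q ⊕ ℕ) := fun s a => Sum.elim
            (fun z => if hz : ∃ y, (z, a, y) ∈ M.E then some (Sum.inl hz.choose)
              else if z = pA k ∧ a = W k then some (midB (k+1))
              else if z = pA k ∧ a = Ltr.inv (W (n-m-1)) then some (midB (n-m-1))
              else none)
            (fun d0 => if a = W (k+d0) then some (midB (k+d0+1))
              else if a = Ltr.inv (W (k+d0-1)) then some (midB (k+d0-1))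
              else if d0 = js ∧ a = Ltr.inv (W (k+L-js-1)) then some (Sum.inr (L-js-1))
              else none) s with hδBdef
          -- evaluation lemmas with fully generic arguments
          have hδBM : ∀ z a y, (z, a, y) ∈ M.E → δB (Sum.inl z) a = some (Sum.inl y) := by
            intro z a y he
            have hz : ∃ y', (z, a, y') ∈ M.E := ⟨y, he⟩
            simp only [hδBdef, Sum.elim_inl, dif_pos hz]
            exact congrArg (some ∘ Sum.inl) (hMdet _ _ _ _ hz.choose_spec he)
          have hδBl2 : ∀ z a, ¬(∃ y, (z, a, y) ∈ M.E) → z = pA k → a = W k →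
              δB (Sum.inl z) a = some (midB (k+1)) := by
            intro z a h1 h2 h3
            simp only [hδBdef, Sum.elim_inl, dif_neg h1, if_pos (And.intro h2 h3)]
          have hδBl3 : ∀ z a, ¬(∃ y, (z, a, y) ∈ M.E) → ¬(z = pA k ∧ a = W k) →
              z = pA k → a = Ltr.inv (W (n-m-1)) →
              δB (Sum.inl z) a = some (midB (n-m-1)) := by
            intro z a h1 h2 h3 h4
            simp only [hδBdef, Sum.elim_inl, dif_neg h1, if_neg h2,
              if_pos (And.intro h3 h4)]
          have hδBr1 : ∀ d0 a, a = W (k+d0) →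
              δB (Sum.inr d0) a = some (midB (k+d0+1)) := by
            intro d0 a ha
            simp only [hδBdef, Sum.elim_inr, if_pos ha]
          have hδBr2 : ∀ d0 a, a ≠ W (k+d0) → a = Ltr.inv (W (k+d0-1)) →
              δB (Sum.inr d0) a = some (midB (k+d0-1)) := by
            intro d0 a h1 h2
            simp only [hδBdef, Sum.elim_inr, if_neg h1, if_pos h2]
          have hδBr3 : ∀ d0 a, a ≠ W (k+d0) → a ≠ Ltr.inv (W (k+d0-1)) → d0 = js →
              a = Ltr.inv (W (k+L-js-1)) →
              δB (Sum.inr d0) a = some (Sum.inr (L-js-1)) := by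
            intro d0 a h1 h2 h3 h4
            simp only [hδBdef, Sum.elim_inr, if_neg h1, if_neg h2,
              if_pos (And.intro h3 h4)]
          have hkL : k + L = n - m := by omega
          apply hgen midB δB hδBM
            (by rw [hmidB1 0 (Nat.zero_le k), hpA0])
            (by rw [hmidB2 n (by omega), (by omega : n - n = 0), hsB0])
          · -- forward edges
            intro j hj
            rcases lt_trichotomy j k with hjk | hjk | hjk
            · rw [hmidB1 j (by omega), hmidB1 (j+1) (by omega)]
              exact hδBM _ _ _ (hpAedge j hjk)
            · subst hjk
              rw [hmidB1 k (le_refl k)]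
              exact hδBl2 _ _ hknomax rfl rfl
            · by_cases hjm : j < n - m
              · -- middle positions
                have hd1 : 1 ≤ j - k := by omega
                have hdL : j - k ≤ L - 1 := by omega
                rw [hmidB3 j hjk hjm]
                by_cases hdc : j - k < L - js
                · rw [hmflt _ hdc]
                  rw [hδBr1 (j-k) (W j) (by rw [(by omega : k + (j-k) = j)])]
                  rw [(by omega : k + (j-k) + 1 = j + 1)]
                · rw [hmfge _ hdc]
                  have hdjs : L - (j-k) ≤ js := by omega
                  have hm := hMATCH (L-(j-k)-1) (by omega)
                  rw [(by omega : L - 1 - (L-(j-k)-1) = j - k)] at hm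
                  have hm' : W (k + (L-(j-k)-1)) = Ltr.inv (W j) := by
                    rw [(by omega : k + (j-k) = j)] at hm
                    exact hm
                  have hlab : W j = Ltr.inv (W (k + (L-(j-k)) - 1)) := by
                    rw [(by omega : k + (L-(j-k)) - 1 = k + (L-(j-k)-1)), hm',
                      Ltr.inv_inv]
                  have hne1 : W j ≠ W (k + (L-(j-k))) := by
                    intro hc
                    refine hadj' (k+(L-(j-k)-1)) (by omega) ?_
                    rw [(by omega : k + (L-(j-k)-1) + 1 = k + (L-(j-k))), ← hc]
                    exact hm' 
                  rw [hδBr2 (L-(j-k)) (W j) hne1 hlab]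
                  by_cases hdL1 : j - k + 1 = L
                  · rw [(by omega : k + (L-(j-k)) - 1 = k), hmidB1 k (le_refl k),
                      (by omega : j + 1 = n - m), hmidB2 (n-m) (le_refl _),
                      (by omega : n - (n - m) = m), hv]
                  · rw [(by omega : k + (L-(j-k)) - 1 = k + (L-(j-k)-1)),
                      hmidB3 (k+(L-(j-k)-1)) (by omega) (by omega),
                      hmidB3 (j+1) (by omega) (by omega)]
                    rw [(by omega : k + (L-(j-k)-1) - k = L-(j-k)-1),
                      (by omega : j + 1 - k = (j-k) + 1)]
                    rw [hmflt (L-(j-k)-1) (by omega), hmfge ((j-k)+1) (by omega)]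
                    rw [(by omega : L - ((j-k)+1) = L - (j-k) - 1)]
              · rw [hmidB2 j (by omega)]
                rw [hδBM _ _ _ (hsBedge' j (by omega) hj), hmidB2 (j+1) (by omega),
                  (by omega : n - (j+1) = n - j - 1)]
          · -- backward edges
            intro j hj
            rcases lt_trichotomy j k with hjk | hjk | hjk
            · rw [hmidB1 (j+1) (by omega), hmidB1 j (by omega)]
              exact hδBM _ _ _ (hpAdual j hjk)
            · subst hjk
              by_cases hL1' : L = 1
              · rw [hmidB2 (k+1) (by omega), (by omega : n - (k+1) = m), ← hv]
                have hWk : W k = W (n-m-1) := by rw [(by omega : k = n-m-1)]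
                rw [hδBl3 (pA k) (Ltr.inv (W k))
                  (by rw [hv, hWk]; exact hmnomax')
                  (fun hc => Ltr.inv_ne (W k) hc.2)
                  rfl (by rw [hWk]),
                  (by omega : n - m - 1 = k), hmidB1 k (le_refl k)]
              · have hL2 : 2 ≤ L := by omega
                rw [hmidB3 (k+1) (by omega) (by omega),
                  (by omega : k + 1 - k = 1), hmflt 1 (by omega)]
                rw [hδBr2 1 (Ltr.inv (W k))
                  (fun hc => hadj k (by omega) (by rw [← (by omega : k + 1 = k + 1)] at hc; exact hc.symm))
                  (by rw [(by omega : k + 1 - 1 = k)]),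
                  (by omega : k + 1 - 1 = k), hmidB1 k (le_refl k)]
            · by_cases hjm : j + 1 < n - m
              · -- middle source
                have hp1 : 2 ≤ j + 1 - k := by omega
                have hpL : j + 1 - k ≤ L - 1 := by omega
                rw [hmidB3 (j+1) (by omega) hjm]
                by_cases hdc : j + 1 - k < L - js
                · rw [hmflt _ hdc]
                  rw [hδBr2 (j+1-k) (Ltr.inv (W j))
                    (fun hc => hadj j (by omega)
                      (by rw [(by omega : j + 1 = k + (j+1-k))]; exact hc.symm))
                    (by rw [(by omega : k + (j+1-k) - 1 = j)])]
                  rw [(by omega : k + (j+1-k) - 1 = j), hmidB3 j hjk (by omega)]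
                · rw [hmfge _ hdc]
                  have hdjs : L - (j+1-k) ≤ js := by omega
                  by_cases hdlt : L - (j+1-k) < js
                  · -- branch 1 applies via the matching property
                    have hm := hMATCH (L-(j+1-k)) hdlt
                    rw [(by omega : k + (L-1-(L-(j+1-k))) = j)] at hm
                    rw [hδBr1 (L-(j+1-k)) (Ltr.inv (W j)) (by rw [hm])]
                    rw [(by omega : k + (L-(j+1-k)) + 1 = k + (L-(j+1-k)+1)),
                      hmidB3 (k+(L-(j+1-k)+1)) (by omega) (by omega),
                      hmidB3 j hjk (by omega),
                      (by omega : k + (L-(j+1-k)+1) - k = L-(j+1-k)+1),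
                      (by omega : j - k = (j+1-k) - 1)]
                    rw [hmflt (L-(j+1-k)+1) (by omega), hmfge ((j+1-k) - 1) (by omega)]
                    rw [(by omega : L - ((j+1-k) - 1) = L-(j+1-k)+1)]
                  · -- the state is the tip of the stem : branch 3
                    have hdeq : L - (j+1-k) = js := by omega
                    have hjs1 : 1 ≤ js := by omega
                    have hne1 : Ltr.inv (W j) ≠ W (k + (L-(j+1-k))) := by
                      rw [hdeq]
                      intro hc
                      rcases hstop with hT | hMjs
                      · have hkj : k + js = j := by omega
                        rw [← hkj] at hc
                        exact Ltr.inv_ne (W (k+js)) hc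
                      · apply hMjs
                        rw [← hc, (by omega : k + (L-1-js) = j)]
                    have hne2 : Ltr.inv (W j) ≠ Ltr.inv (W (k + (L-(j+1-k)) - 1)) := by
                      rw [hdeq]
                      intro hc
                      have hWeq : W j = W (k + js - 1) := Ltr.inv_injective hc
                      have hm := hMATCH (js-1) (by omega)
                      rw [(by omega : L - 1 - (js-1) = L - js)] at hm
                      refine hadj' j (by omega) ?_
                      rw [hWeq, (by omega : k + js - 1 = k + (js-1)),
                        (by omega : j + 1 = k + (L-js))]
                      exact hm
                    rw [hδBr3 (L-(j+1-k)) (Ltr.inv (W j)) hne1 hne2 hdeq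
                      (by rw [(by omega : k + L - js - 1 = j)])]
                    rw [hmidB3 j hjk (by omega), (by omega : j - k = L - js - 1),
                      hmflt (L-js-1) (by omega)]
              · by_cases hc1 : j + 1 = n - m
                · -- source is the base of the lollipop
                  have hL2 : 2 ≤ L := by omega
                  rw [hmidB2 (j+1) (by omega), (by omega : n - (j+1) = m), ← hv]
                  have hnoM : ¬∃ y, (pA k, Ltr.inv (W j), y) ∈ M.E := by
                    rw [hv, (by omega : j = n - m - 1)]
                    exact hmnomax'
                  by_cases hlab : Ltr.inv (W j) = W k
                  · rw [hδBl2 (pA k) (Ltr.inv (W j)) hnoM rfl hlab]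
                    -- both sides are the state inr 1
                    have hM0 : W (k+0) = Ltr.inv (W (k + (L-1-0))) := by
                      rw [(by omega : k + 0 = k), (by omega : k + (L-1-0) = j)]
                      exact hlab.symm
                    have hjs1 : 1 ≤ js := by
                      by_contra hjs0
                      exact hjsmax 1 (by omega) (by omega)
                        ⟨by omega, fun d hd => by rw [(by omega : d = 0)]; exact hM0⟩
                    rw [hmidB3 (k+1) (by omega) (by omega), hmidB3 j hjk (by omega),
                      (by omega : k + 1 - k = 1), (by omega : j - k = L - 1)]
                    rw [hmflt 1 (by omega), hmfge (L-1) (by omega),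
                      (by omega : L - (L-1) = 1)]
                  · rw [hδBl3 (pA k) (Ltr.inv (W j)) hnoM (fun hc => hlab hc.2) rfl
                      (by rw [(by omega : n - m - 1 = j)]),
                      (by omega : n - m - 1 = j)]
                · rw [hmidB2 (j+1) (by omega), (by omega : n - (j+1) = n - j - 1)]
                  rw [hδBM _ _ _ (hsBdual' j (by omega) hj), hmidB2 j (by omega)]
        · -- B2a : the middle of w survives
          set midA : ℕ → M.Q ⊕ ℕ := fun j =>
            if j ≤ k then Sum.inl (pA j)
            else if n - m ≤ j then Sum.inl (sB (n - j)) else Sum.inr j with hmidAdef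
          have hmidA1 : ∀ j, j ≤ k → midA j = Sum.inl (pA j) := by
            intro j hj; rw [hmidAdef]; simp only [if_pos hj]
          have hmidA2 : ∀ j, n - m ≤ j → midA j = Sum.inl (sB (n - j)) := by
            intro j hj
            rw [hmidAdef]
            simp only [if_neg (by omega : ¬ j ≤ k), if_pos hj]
          have hmidA3 : ∀ j, k < j → j < n - m → midA j = Sum.inr j := by
            intro j hj1 hj2
            rw [hmidAdef]
            simp only [if_neg (by omega : ¬ j ≤ k), if_neg (by omega : ¬ n - m ≤ j)]
          set δA : (M.Q ⊕ ℕ) → Ltr A → Option (M.Q ⊕ ℕ) := fun s a => Sum.elim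
            (fun z => if hz : ∃ y, (z, a, y) ∈ M.E then some (Sum.inl hz.choose)
              else if z = pA k ∧ a = W k then some (midA (k+1))
              else if z = sB m ∧ a = Ltr.inv (W (n-m-1)) then some (midA (n-m-1))
              else none)
            (fun d => if a = W d then some (midA (d+1))
              else if a = Ltr.inv (W (d-1)) then some (midA (d-1))
              else none) s with hδAdef
          have hδAM : ∀ z a y, (z, a, y) ∈ M.E → δA (Sum.inl z) a = some (Sum.inl y) := by
            intro z a y he
            have hz : ∃ y', (z, a, y') ∈ M.E := ⟨y, he⟩
            simp only [hδAdef, Sum.elim_inl, dif_pos hz]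
            exact congrArg (some ∘ Sum.inl) (hMdet _ _ _ _ hz.choose_spec he)
          apply hgen midA δA hδAM
            (by rw [hmidA1 0 (Nat.zero_le k), hpA0])
            (by rw [hmidA2 n (by omega)]
                have h0 : n - n = 0 := by omega
                rw [h0, hsB0])
          · -- forward edges
            intro j hj
            rcases lt_trichotomy j k with hjk | hjk | hjk
            · rw [hmidA1 j (by omega), hmidA1 (j+1) (by omega)]
              exact hδAM _ _ _ (hpAedge j hjk)
            · subst hjk
              rw [hmidA1 k (le_refl k)]
              simp only [hδAdef, Sum.elim_inl, dif_neg hknomax]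
              simp
            · by_cases hjm : j < n - m
              · rw [hmidA3 j hjk hjm]
                simp only [hδAdef, Sum.elim_inr]
                simp
              · rw [hmidA2 j (by omega)]
                have := hδAM _ _ _ (hsBedge' j (by omega) hj)
                rw [this, hmidA2 (j+1) (by omega)]
                have h1 : n - (j+1) = n - j - 1 := by omega
                rw [h1]
          · -- backward edges
            intro j hj
            rcases lt_trichotomy j k with hjk | hjk | hjk
            · rw [hmidA1 (j+1) (by omega), hmidA1 j (by omega)]
              exact hδAM _ _ _ (hpAdual j hjk)
            · subst hjk
              by_cases hc1 : k + 1 = n - m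
              · have h1 : midA (k+1) = Sum.inl (sB m) := by
                  rw [hmidA2 (k+1) (by omega)]
                  have h2 : n - (k+1) = m := by omega
                  rw [h2]
                rw [h1]
                have hWk : W k = W (n-m-1) := by
                  have h3 : k = n - m - 1 := by omega
                  rw [h3]
                simp only [hδAdef, Sum.elim_inl]
                rw [dif_neg (by rw [hWk]; exact hmnomax'),
                  if_neg (fun hc => hv hc.1.symm),
                  if_pos (show _ ∧ _ by refine ⟨?_, ?_⟩ <;> simp [hWk])]
                have h4 : n - m - 1 = k := by omega
                rw [h4, hmidA1 k (le_refl k)]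
              · have h1 : midA (k+1) = Sum.inr (k+1) := by
                  rw [hmidA3 (k+1) (by omega) (by omega)]
                rw [h1]
                simp only [hδAdef, Sum.elim_inr]
                rw [if_neg (fun hc => hadj k (by omega) hc.symm)]
                rw [if_pos (by
                  have h2 : k + 1 - 1 = k := by omega
                  rw [h2])]
                have h2 : k + 1 - 1 = k := by omega
                rw [h2, hmidA1 k (le_refl k)]
            · by_cases hjm : j + 1 < n - m
              · rw [hmidA3 (j+1) (by omega) hjm]
                simp only [hδAdef, Sum.elim_inr]
                rw [if_neg (fun hc => hadj j (by omega) hc.symm)]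
                rw [if_pos (by
                  have h2 : j + 1 - 1 = j := by omega
                  rw [h2])]
                have h2 : j + 1 - 1 = j := by omega
                rw [h2, hmidA3 j hjk (by omega)]
              · by_cases hc1 : j + 1 = n - m
                · have h1 : midA (j+1) = Sum.inl (sB m) := by
                    rw [hmidA2 (j+1) (by omega)]
                    have h2 : n - (j+1) = m := by omega
                    rw [h2]
                  rw [h1]
                  have hWj : W j = W (n-m-1) := by
                    have h3 : j = n - m - 1 := by omega
                    rw [h3]
                  simp only [hδAdef, Sum.elim_inl]
                  rw [dif_neg (by rw [hWj]; exact hmnomax'),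
                    if_neg (fun hc => hv hc.1.symm),
                    if_pos (show _ ∧ _ by refine ⟨?_, ?_⟩ <;> simp [hWj])]
                  have h4 : n - m - 1 = j := by omega
                  rw [h4, hmidA3 j hjk (by omega)]
                · rw [hmidA2 (j+1) (by omega)]
                  have h1 : n - (j+1) = n - j - 1 := by omega
                  rw [h1]
                  have := hδAM _ _ _ (hsBdual' j (by omega) hj)
                  rw [this, hmidA2 j (by omega)]
    exact ⟨M.q0, M.q0, w, hwred, le_refl _, hkeep, π₀, hinj, hπ₀hom⟩

end Prop23
/-- Proposition 2.3: if `M →e^w N` then `M →i N` or `M →re^{(p,u,q)} N` for some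
states `p, q` and some reduced word `u` with `|u| ≤ |w|`. -/
theorem estep_to_istep_or_restep
    {A : Type} (M N : Autom A)
    (hMinv : M.IsInv) (hMred : M.IsRed) (hNinv : N.IsInv) (hNred : N.IsRed)
    (w : List (Ltr A)) (hw : w ≠ []) (hwred : IsReducedWord w)
    (h : M.EStep w N) :
    Autom.IStepAny M N ∨
      ∃ (p q : M.Q) (u : List (Ltr A)), IsReducedWord u ∧ u.length ≤ w.length ∧
        M.REStep p u q N := by
  exact Prop23.main M N hMinv hMred hNinv hNred w hw hwred h
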